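/- arXiv:1308.2992 — 3 statements merged into one kernel-verified Lean document; each statement's English description precedes it below -/
import Mathlib

section
/- For every $k\in\mathbf{ex}$ one has $\textstyle\int_\mathbf{i}\mathbf{b}^k=\varepsilon_k+\varepsilon_{k^+}+\sum_{p=k+1}^{k^+-1} a_{i_p i_k}\varepsilon_p$. -/
open Finset

/-- The weight lattice `𝒫`: the free abelian group with basis `{αᵢ, ωᵢ : i ∈ I}`,
represented by pairs of coefficient vectors (first component: coefficients of the `αᵢ`,
second component: coefficients of the `ωᵢ`). -/
abbrev PLat (n : ℕ) := (Fin n → ℤ) × (Fin n → ℤ)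

/-- The coroot lattice `𝒬^∨`: the free abelian group with basis `{αᵢ^∨ : i ∈ I}`,
represented by coefficient vectors. -/
abbrev QvLat (n : ℕ) := Fin n → ℤ

variable {n : ℕ}

/-- The basis element `α_j^∨` of `𝒬^∨`. -/
def coroot (j : Fin n) : QvLat n := fun k => if k = j then 1 else 0

/-- The basis element `α_j` of `𝒫`. -/
def alP (j : Fin n) : PLat n := (fun k => if k = j then 1 else 0, 0)

/-- The basis element `ω_j` of `𝒫`. -/
def omP (j : Fin n) : PLat n := (0, fun k => if k = j then 1 else 0)

/-- The biadditive pairing `𝒬^∨ × 𝒫 → ℤ` with `(αᵢ^∨, α_j) = a_{ij}` and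
`(αᵢ^∨, ω_j) = δ_{ij}`. -/
def pairQP (A : Fin n → Fin n → ℤ) (x : QvLat n) (lam : PLat n) : ℤ :=
  (∑ a, ∑ b, x a * A a b * lam.1 b) + ∑ a, x a * lam.2 a

/-- The simple reflection `sᵢ` on `𝒫`: `sᵢ α_j = α_j - a_{ij} αᵢ`,
`sᵢ ω_j = ω_j - δ_{ij} αᵢ`. -/
def sP (A : Fin n → Fin n → ℤ) (a : Fin n) (lam : PLat n) : PLat n :=
  (fun j => if j = a then lam.1 a - ((∑ k, A a k * lam.1 k) + lam.2 a) else lam.1 j,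
   lam.2)

/-- The simple reflection `sᵢ^∨` on `𝒬^∨`: `sᵢ^∨ α_j^∨ = α_j^∨ - a_{ji} αᵢ^∨`. -/
def sQ (A : Fin n → Fin n → ℤ) (a : Fin n) (x : QvLat n) : QvLat n :=
  fun j => if j = a then x a - ∑ k, A k a * x k else x j

/-- `w_ℓ = s_{i₁} ∘ ⋯ ∘ s_{i_ℓ}` on `𝒫` (with `w₀ = id`). -/
def wP (A : Fin n → Fin n → ℤ) (ii : ℕ → Fin n) : ℕ → PLat n → PLat n
  | 0 => id
  | (l+1) => wP A ii l ∘ sP A (ii (l+1))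

/-- `w_ℓ^∨ = s_{i₁}^∨ ∘ ⋯ ∘ s_{i_ℓ}^∨` on `𝒬^∨` (with `w₀ = id`). -/
def wQ (A : Fin n → Fin n → ℤ) (ii : ℕ → Fin n) : ℕ → QvLat n → QvLat n
  | 0 => id
  | (l+1) => wQ A ii l ∘ sQ A (ii (l+1))

/-- `k⁺ = min({ℓ : k < ℓ ≤ m, i_ℓ = i_k} ∪ {m+1})`. -/
noncomputable def kplus (ii : ℕ → Fin n) (m k : ℕ) : ℕ :=
  sInf ({l | k < l ∧ l ≤ m ∧ ii l = ii k} ∪ {m+1})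

/-- `k⁻ = max({ℓ : 1 ≤ ℓ < k, i_ℓ = i_k} ∪ {0})`. -/
noncomputable def kminus (ii : ℕ → Fin n) (k : ℕ) : ℕ :=
  sSup ({l | 1 ≤ l ∧ l < k ∧ ii l = ii k} ∪ {0})

/-- The standard basis vector `ε_k` of `ℤ^m` (1-based index), with the convention
`ε_s = 0` for `s ∉ {1,…,m}`. -/
def eps (m k : ℕ) : Fin m → ℤ := fun j => if (j : ℕ) + 1 = k then 1 else 0

/-- `φ_𝐢(ε_k) = -ε_k - ε_{k⁻} - ∑_{ℓ : ℓ < k < ℓ⁺} a_{i_ℓ i_k} ε_ℓ`. -/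
noncomputable def phiE (A : Fin n → Fin n → ℤ) (ii : ℕ → Fin n) (m k : ℕ) :
    Fin m → ℤ :=
  -(eps m k) - eps m (kminus ii k)
    - ∑ l : Fin m, (if (l:ℕ)+1 < k ∧ k < kplus ii m ((l:ℕ)+1)
        then A (ii ((l:ℕ)+1)) (ii k) else 0) • eps m ((l:ℕ)+1)

/-- The endomorphism `φ_𝐢` of `ℤ^m`, extended additively from its values on the basis. -/
noncomputable def phiMap (A : Fin n → Fin n → ℤ) (ii : ℕ → Fin n) (m : ℕ)
    (v : Fin m → ℤ) : Fin m → ℤ :=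
  ∑ k : Fin m, v k • phiE A ii m ((k:ℕ)+1)

/-- `φ'_𝐢(ε_ℓ) = -∑_{k=1}^{ℓ} (w_k^∨ α_{i_k}^∨, w_ℓ ω_{i_ℓ}) ε_k`. -/
def phiE' (A : Fin n → Fin n → ℤ) (ii : ℕ → Fin n) (m l : ℕ) : Fin m → ℤ :=
  -∑ k : Fin m, (if (k:ℕ)+1 ≤ l then
      pairQP A (wQ A ii ((k:ℕ)+1) (coroot (ii ((k:ℕ)+1)))) (wP A ii l (omP (ii l)))
    else 0) • eps m ((k:ℕ)+1)

/-- The endomorphism `φ'_𝐢` of `ℤ^m`, extended additively from its values on the basis. -/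
def phiMap' (A : Fin n → Fin n → ℤ) (ii : ℕ → Fin n) (m : ℕ)
    (v : Fin m → ℤ) : Fin m → ℤ :=
  ∑ l : Fin m, v l • phiE' A ii m ((l:ℕ)+1)

/-- `∂_𝐢 ε_k = ε_k - ε_{k⁻}`. -/
noncomputable def derE (ii : ℕ → Fin n) (m k : ℕ) : Fin m → ℤ :=
  eps m k - eps m (kminus ii k)

/-- The endomorphism `∂_𝐢` of `ℤ^m`. -/
noncomputable def derMap (ii : ℕ → Fin n) (m : ℕ) (v : Fin m → ℤ) : Fin m → ℤ :=
  ∑ k : Fin m, v k • derE ii m ((k:ℕ)+1)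

/-- `∫_𝐢 ε_k = ε_k + ε_{k⁻} + ε_{(k⁻)⁻} + ⋯` (summing along the chain `k > k⁻ > ⋯ > 0`). -/
noncomputable def intE (ii : ℕ → Fin n) (m : ℕ) (k : ℕ) : Fin m → ℤ :=
  if h : kminus ii k < k then eps m k + intE ii m (kminus ii k) else eps m k
termination_by k
decreasing_by exact h

/-- The endomorphism `∫_𝐢` of `ℤ^m`. -/
noncomputable def intMap (ii : ℕ → Fin n) (m : ℕ) (v : Fin m → ℤ) : Fin m → ℤ :=
  ∑ k : Fin m, v k • intE ii m ((k:ℕ)+1)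

/-- The skew-symmetric biadditive form `Λ_𝐢` on `ℤ^m` with
`Λ_𝐢(ε_k, ε_ℓ) = sgn(k-ℓ) c_{i_k i_ℓ}` where `c_{ij} = dᵢ a_{ij}`. -/
def LamF (A : Fin n → Fin n → ℤ) (d : Fin n → ℤ) (ii : ℕ → Fin n) (m : ℕ)
    (a b : Fin m → ℤ) : ℤ :=
  ∑ k : Fin m, ∑ l : Fin m, a k * b l *
    ((((k:ℕ):ℤ) - ((l:ℕ):ℤ)).sign *
      (d (ii ((k:ℕ)+1)) * A (ii ((k:ℕ)+1)) (ii ((l:ℕ)+1))))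

/-- The biadditive form `Φ_𝐢` on `ℤ^m` with `Φ_𝐢(ε_k,ε_ℓ) = -d_{i_k}` if `k = ℓ`,
`= -c_{i_ℓ i_k}` if `ℓ < k`, and `= 0` if `ℓ > k`. -/
def PhiF (A : Fin n → Fin n → ℤ) (d : Fin n → ℤ) (ii : ℕ → Fin n) (m : ℕ)
    (a b : Fin m → ℤ) : ℤ :=
  ∑ k : Fin m, ∑ l : Fin m, a k * b l *
    (if (k:ℕ) = (l:ℕ) then -(d (ii ((k:ℕ)+1)))
     else if (l:ℕ) < (k:ℕ) then
       -(d (ii ((l:ℕ)+1)) * A (ii ((l:ℕ)+1)) (ii ((k:ℕ)+1)))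
     else 0)

/-- The entry `b_{pk}` of the exchange matrix `B̃_𝐢`. -/
noncomputable def bcoef (A : Fin n → Fin n → ℤ) (ii : ℕ → Fin n) (m p k : ℕ) : ℤ :=
  if p = kminus ii k then -1
  else if p < k ∧ k < kplus ii m p ∧ kplus ii m p < kplus ii m k then
    -(A (ii p) (ii k))
  else if k < p ∧ p < kplus ii m k ∧ kplus ii m k < kplus ii m p then
    A (ii p) (ii k)
  else if p = kplus ii m k then 1
  else 0

/-- The column `𝐛^k = ∑_p b_{pk} ε_p ∈ ℤ^m` of the exchange matrix. -/
noncomputable def bvec (A : Fin n → Fin n → ℤ) (ii : ℕ → Fin n) (m k : ℕ) :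
    Fin m → ℤ :=
  fun p => bcoef A ii m ((p:ℕ)+1) k

/-- `ρ_𝐢⁺(ε_k) = ε_k + ∑_{ℓ<k, ℓ⁺=m+1} a_{i_ℓ i_k} ε_ℓ`. -/
noncomputable def rhoPE (A : Fin n → Fin n → ℤ) (ii : ℕ → Fin n) (m k : ℕ) :
    Fin m → ℤ :=
  eps m k + ∑ l : Fin m, (if (l:ℕ)+1 < k ∧ kplus ii m ((l:ℕ)+1) = m+1
      then A (ii ((l:ℕ)+1)) (ii k) else 0) • eps m ((l:ℕ)+1)

/-- `ρ_𝐢⁻(ε_k) = ε_k - ∑_{ℓ≤k, ℓ⁺=m+1} a_{i_ℓ i_k} ε_ℓ`. -/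
noncomputable def rhoME (A : Fin n → Fin n → ℤ) (ii : ℕ → Fin n) (m k : ℕ) :
    Fin m → ℤ :=
  eps m k - ∑ l : Fin m, (if (l:ℕ)+1 ≤ k ∧ kplus ii m ((l:ℕ)+1) = m+1
      then A (ii ((l:ℕ)+1)) (ii k) else 0) • eps m ((l:ℕ)+1)

/-- The endomorphism `ρ_𝐢⁺` of `ℤ^m`. -/
noncomputable def rhoPMap (A : Fin n → Fin n → ℤ) (ii : ℕ → Fin n) (m : ℕ)
    (v : Fin m → ℤ) : Fin m → ℤ :=
  ∑ k : Fin m, v k • rhoPE A ii m ((k:ℕ)+1)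

/-- The endomorphism `ρ_𝐢⁻` of `ℤ^m`. -/
noncomputable def rhoMMap (A : Fin n → Fin n → ℤ) (ii : ℕ → Fin n) (m : ℕ)
    (v : Fin m → ℤ) : Fin m → ℤ :=
  ∑ k : Fin m, v k • rhoME A ii m ((k:ℕ)+1)

/-- `𝐚_λ = -∑_{k=1}^m (w_k^∨ α_{i_k}^∨, w_m λ) ε_k ∈ ℤ^m`. -/
def avec (A : Fin n → Fin n → ℤ) (ii : ℕ → Fin n) (m : ℕ) (lam : PLat n) :
    Fin m → ℤ :=
  fun k => -(pairQP A (wQ A ii ((k:ℕ)+1) (coroot (ii ((k:ℕ)+1)))) (wP A ii m lam))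

/-- `|𝐚| = ∑_{k=1}^m a_k α_{i_k} ∈ 𝒬 ⊆ 𝒫`. -/
def degP (ii : ℕ → Fin n) (m : ℕ) (a : Fin m → ℤ) : PLat n :=
  (fun j => ∑ k : Fin m, if ii ((k:ℕ)+1) = j then a k else 0, 0)

/-- The pairing `(μ, λ) = ∑ mᵢ dᵢ (αᵢ^∨, λ)` for `μ = ∑ mᵢ αᵢ ∈ 𝒬` and `λ ∈ 𝒫`
(induced by identifying `αᵢ` with `dᵢ αᵢ^∨`). -/
def pairAl (A : Fin n → Fin n → ℤ) (d : Fin n → ℤ) (mu lam : PLat n) : ℤ :=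
  ∑ j, mu.1 j * (d j * pairQP A (coroot j) lam)

lemma kplus_spec (ii : ℕ → Fin n) (m k : ℕ) :
    kplus ii m k = m+1 ∨
      (k < kplus ii m k ∧ kplus ii m k ≤ m ∧ ii (kplus ii m k) = ii k) := by
  have h : kplus ii m k ∈ ({l | k < l ∧ l ≤ m ∧ ii l = ii k} ∪ {m+1} : Set ℕ) :=
    Nat.sInf_mem ⟨m+1, Or.inr rfl⟩
  rcases h with h | h
  · exact Or.inr h
  · exact Or.inl h

lemma kplus_le (ii : ℕ → Fin n) (m : ℕ) {k l : ℕ} (h1 : k < l) (h2 : l ≤ m)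
    (h3 : ii l = ii k) : kplus ii m k ≤ l :=
  Nat.sInf_le (Or.inl ⟨h1, h2, h3⟩)

lemma kplus_le_succ (ii : ℕ → Fin n) (m k : ℕ) : kplus ii m k ≤ m+1 :=
  Nat.sInf_le (Or.inr rfl)

lemma lt_kplus (ii : ℕ → Fin n) {m k : ℕ} (hk : k ≤ m) : k < kplus ii m k := by
  rcases kplus_spec ii m k with h | h
  · omega
  · exact h.1

lemma kplus_min (ii : ℕ → Fin n) {m k l : ℕ} (h1 : k < l) (h2 : l ≤ m)
    (h3 : l < kplus ii m k) : ii l ≠ ii k := by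
  intro hcon
  exact absurd (kplus_le ii m h1 h2 hcon) (by omega)

lemma kminus_bdd (ii : ℕ → Fin n) (k : ℕ) :
    BddAbove ({l | 1 ≤ l ∧ l < k ∧ ii l = ii k} ∪ {0} : Set ℕ) := by
  refine ⟨k, fun l hl => ?_⟩
  rcases hl with h | h
  · exact le_of_lt h.2.1
  · simp only [Set.mem_singleton_iff] at h; omega

lemma kminus_spec (ii : ℕ → Fin n) (k : ℕ) :
    kminus ii k = 0 ∨
      (1 ≤ kminus ii k ∧ kminus ii k < k ∧ ii (kminus ii k) = ii k) := by
  have h : kminus ii k ∈ ({l | 1 ≤ l ∧ l < k ∧ ii l = ii k} ∪ {0} : Set ℕ) :=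
    Nat.sSup_mem ⟨0, Or.inr rfl⟩ (kminus_bdd ii k)
  rcases h with h | h
  · exact Or.inr h
  · exact Or.inl h

lemma le_kminus (ii : ℕ → Fin n) {k l : ℕ} (h1 : 1 ≤ l) (h2 : l < k)
    (h3 : ii l = ii k) : l ≤ kminus ii k :=
  le_csSup (kminus_bdd ii k) (Or.inl ⟨h1, h2, h3⟩)

lemma kminus_lt (ii : ℕ → Fin n) {k : ℕ} (hk : 1 ≤ k) : kminus ii k < k := by
  rcases kminus_spec ii k with h | h
  · omega
  · exact h.2.1

lemma kminus_max (ii : ℕ → Fin n) {k l : ℕ} (h1 : kminus ii k < l) (h2 : l < k) :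
    ii l ≠ ii k := by
  intro hcon
  exact absurd (le_kminus ii (by omega) h2 hcon) (by omega)

/-- If `s ≤ m` has an earlier occurrence, then `(s⁻)⁺ = s`. -/
lemma kplus_kminus (ii : ℕ → Fin n) {m s : ℕ} (hs : s ≤ m)
    (h1 : 1 ≤ kminus ii s) : kplus ii m (kminus ii s) = s := by
  rcases kminus_spec ii s with h | h
  · omega
  have hle : kplus ii m (kminus ii s) ≤ s := kplus_le ii m h.2.1 hs h.2.2.symm
  rcases kplus_spec ii m (kminus ii s) with h' | h'
  · omega
  by_contra hne
  exact kminus_max ii h'.1 (by omega) (h'.2.2.trans h.2.2)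

/-- If `k⁺ ≤ m` then `(k⁺)⁻ = k`. -/
lemma kminus_kplus (ii : ℕ → Fin n) {m k : ℕ} (hk : 1 ≤ k)
    (h : kplus ii m k ≤ m) : kminus ii (kplus ii m k) = k := by
  rcases kplus_spec ii m k with h' | h'
  · omega
  have hle : k ≤ kminus ii (kplus ii m k) := le_kminus ii hk h'.1 h'.2.2.symm
  have hlt : kminus ii (kplus ii m k) < kplus ii m k := kminus_lt ii (by omega)
  by_contra hne
  rcases kminus_spec ii (kplus ii m k) with h'' | h''
  · omega
  exact kplus_min ii (by omega) (by omega) hlt (h''.2.2.trans h'.2.2)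

lemma intE_apply (ii : ℕ → Fin n) (m : ℕ) :
    ∀ k, 1 ≤ k → ∀ q : Fin m,
    intE ii m k q =
      if ((q:ℕ)+1 = k ∨ ((q:ℕ)+1 < k ∧ ii ((q:ℕ)+1) = ii k)) then 1 else 0 := by
  intro k
  induction k using Nat.strong_induction_on with
  | _ k IH =>
    intro hk q
    have hlt : kminus ii k < k := kminus_lt ii hk
    rw [intE, dif_pos hlt]
    rcases kminus_spec ii k with h0 | h1
    · -- kminus = 0 : intE ii m 0 = eps m 0 = 0 at q
      rw [h0]
      have : intE ii m 0 = eps m 0 := by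
        rw [intE]
        have : ¬ kminus ii 0 < 0 := by omega
        rw [dif_neg this]
      rw [this]
      have hq0 : eps m 0 q = 0 := by simp [eps]
      rw [Pi.add_apply, hq0, add_zero]
      show (if (q:ℕ)+1 = k then 1 else 0) = _
      by_cases hqk : (q:ℕ)+1 = k
      · rw [if_pos hqk, if_pos (Or.inl hqk)]
      · have hnot : ¬((q:ℕ)+1 = k ∨ ((q:ℕ)+1 < k ∧ ii ((q:ℕ)+1) = ii k)) := by
          rintro (h | ⟨h1, h2⟩)
          · exact hqk h
          · have := le_kminus ii (by omega) h1 h2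
            omega
        rw [if_neg hqk, if_neg hnot]
    · -- kminus = k' ≥ 1
      obtain ⟨hk1', hk2', hk3'⟩ := h1
      rw [Pi.add_apply, IH _ hk2' hk1' q]
      have heps : eps m k q = if (q:ℕ)+1 = k then 1 else 0 := rfl
      by_cases hqk : (q:ℕ)+1 = k
      · have h2 : ¬((q:ℕ)+1 = kminus ii k ∨
            ((q:ℕ)+1 < kminus ii k ∧ ii ((q:ℕ)+1) = ii (kminus ii k))) := by
          rintro (h | ⟨h1, _⟩) <;> omega
        rw [heps, if_pos hqk, if_neg h2, if_pos (Or.inl hqk), add_zero]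
      · rw [heps, if_neg hqk, zero_add]
        by_cases hc : ((q:ℕ)+1 = kminus ii k ∨
            ((q:ℕ)+1 < kminus ii k ∧ ii ((q:ℕ)+1) = ii (kminus ii k)))
        · have hc2 : ((q:ℕ)+1 = k ∨ ((q:ℕ)+1 < k ∧ ii ((q:ℕ)+1) = ii k)) := by
            rcases hc with h | ⟨h1, h2⟩
            · exact Or.inr ⟨by omega, by rw [h]; exact hk3'⟩
            · exact Or.inr ⟨by omega, h2.trans hk3'⟩
          rw [if_pos hc, if_pos hc2]
        · have hc2 : ¬((q:ℕ)+1 = k ∨ ((q:ℕ)+1 < k ∧ ii ((q:ℕ)+1) = ii k)) := by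
            rintro (h | ⟨h1, h2⟩)
            · exact hqk h
            · have hle := le_kminus ii (by omega) h1 h2
              rcases Nat.lt_or_ge ((q:ℕ)+1) (kminus ii k) with h' | h'
              · exact hc (Or.inr ⟨h', h2.trans hk3'.symm⟩)
              · exact hc (Or.inl (by omega))
          rw [if_neg hc, if_neg hc2]

/-- The telescoping potential. -/
noncomputable def Efun (A : Fin n → Fin n → ℤ) (ii : ℕ → Fin n) (m k x : ℕ) : ℤ :=
  -(if k < x ∧ x < kplus ii m k then A (ii x) (ii k) else 0)
  - (if k ≤ x ∧ x ≤ kplus ii m k ∧ ii x = ii k then 1 else 0)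

lemma Efun_sameletter (A : Fin n → Fin n → ℤ) (ii : ℕ → Fin n) {m k x : ℕ}
    (hx : ii x = ii k) (hxm : x ≤ m) :
    Efun A ii m k x = if k ≤ x ∧ x ≤ kplus ii m k then -1 else 0 := by
  have h1 : ¬(k < x ∧ x < kplus ii m k) := by
    rintro ⟨ha, hb⟩
    exact kplus_min ii ha hxm hb hx
  rw [Efun, if_neg h1, neg_zero, zero_sub]
  by_cases h2 : k ≤ x ∧ x ≤ kplus ii m k
  · rw [if_pos (⟨h2.1, h2.2, hx⟩ : k ≤ x ∧ x ≤ kplus ii m k ∧ ii x = ii k),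
      if_pos h2]
  · rw [if_neg (show ¬(k ≤ x ∧ x ≤ kplus ii m k ∧ ii x = ii k) from
      fun h => h2 ⟨h.1, h.2.1⟩), if_neg h2, neg_zero]

lemma Efun_diffletter (A : Fin n → Fin n → ℤ) (ii : ℕ → Fin n) {m k x : ℕ}
    (hx : ii x ≠ ii k) :
    Efun A ii m k x = -(if k < x ∧ x < kplus ii m k then A (ii x) (ii k) else 0) := by
  rw [Efun, if_neg (show ¬(k ≤ x ∧ x ≤ kplus ii m k ∧ ii x = ii k) from
    fun h => hx h.2.2), sub_zero]

lemma Efun_big (A : Fin n → Fin n → ℤ) (ii : ℕ → Fin n) {m k x : ℕ}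
    (hx : kplus ii m k < x) : Efun A ii m k x = 0 := by
  rw [Efun, if_neg (by omega), if_neg (by omega), neg_zero, sub_zero]

lemma bcoef_eq (A : Fin n → Fin n → ℤ) (ii : ℕ → Fin n) {m k p : ℕ}
    (hk1 : 1 ≤ k) (hk2 : kplus ii m k ≤ m) (hp1 : 1 ≤ p) (hp2 : p ≤ m) :
    bcoef A ii m p k = Efun A ii m k (kplus ii m p) - Efun A ii m k p := by
  obtain ⟨hkK, -, hiK⟩ : k < kplus ii m k ∧ kplus ii m k ≤ m ∧
      ii (kplus ii m k) = ii k := by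
    rcases kplus_spec ii m k with h | h
    · omega
    · exact h
  have hpP : p < kplus ii m p := lt_kplus ii hp2
  have hPs : kplus ii m p ≤ m+1 := kplus_le_succ ii m p
  by_cases heq : ii p = ii k
  · -- same letter as i_k
    rcases Nat.lt_trichotomy p k with hpk | hpk | hpk
    · -- p < k : P ≤ k
      have hPk : kplus ii m p ≤ k := kplus_le ii m hpk (by omega) heq.symm
      have hiP : ii (kplus ii m p) = ii p := by
        rcases kplus_spec ii m p with h | h
        · omega
        · exact h.2.2
      rw [Efun_sameletter A ii heq hp2,
          Efun_sameletter A ii (hiP.trans heq) (by omega)]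
      rw [if_neg (show ¬(k ≤ p ∧ p ≤ kplus ii m k) by omega)]
      by_cases hPek : kplus ii m p = k
      · have hpkm : p = kminus ii k := by
          have := kminus_kplus ii hp1 (show kplus ii m p ≤ m by omega)
          rw [hPek] at this
          omega
        rw [bcoef, if_pos hpkm,
          if_pos (show k ≤ kplus ii m p ∧ kplus ii m p ≤ kplus ii m k by omega)]
        ring
      · have hpkm : p ≠ kminus ii k := by
          intro hcon
          have := kplus_kminus ii (show k ≤ m by omega)
            (show 1 ≤ kminus ii k by omega)
          rw [← hcon] at this
          omega
        rw [bcoef, if_neg hpkm, if_neg (by omega), if_neg (by omega),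
          if_neg (by omega), if_neg (by omega)]
        ring
    · -- p = k
      subst hpk
      have hpkm : p ≠ kminus ii p := by
        have := kminus_lt ii hp1; omega
      rw [bcoef, if_neg hpkm, if_neg (by omega), if_neg (by omega),
        if_neg (by omega)]
      rw [Efun_sameletter A ii heq hp2, Efun_sameletter A ii hiK (by omega)]
      rw [if_pos (show p ≤ p ∧ p ≤ kplus ii m p by omega),
        if_pos (show p ≤ kplus ii m p ∧ kplus ii m p ≤ kplus ii m p by omega)]
      ring
    · -- k < p : K ≤ p
      have hKp : kplus ii m k ≤ p := by
        by_contra hcon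
        exact kplus_min ii hpk hp2 (by omega) heq
      have hpkm : p ≠ kminus ii k := by
        have := kminus_lt ii hk1; omega
      by_cases hpek : p = kplus ii m k
      · rw [bcoef, if_neg hpkm, if_neg (by omega), if_neg (by omega), if_pos hpek]
        rw [Efun_sameletter A ii heq hp2,
          Efun_big A ii (show kplus ii m k < kplus ii m p by omega)]
        rw [if_pos (show k ≤ p ∧ p ≤ kplus ii m k by omega)]
        ring
      · rw [bcoef, if_neg hpkm, if_neg (by omega), if_neg (by omega),
          if_neg hpek]
        rw [Efun_sameletter A ii heq hp2,
          Efun_big A ii (show kplus ii m k < kplus ii m p by omega)]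
        rw [if_neg (by omega)]
        ring
  · -- different letter
    have hpk : p ≠ k := fun h => heq (by rw [h])
    have hpK : p ≠ kplus ii m k := fun h => heq (by rw [h]; exact hiK)
    have hPk : kplus ii m p ≠ k := by
      intro h
      rcases kplus_spec ii m p with h' | h'
      · omega
      · exact heq ((h'.2.2.symm).trans (by rw [h]))
    have hPK : kplus ii m p ≠ kplus ii m k := by
      intro h
      rcases kplus_spec ii m p with h' | h'
      · omega
      · exact heq ((h'.2.2.symm).trans (by rw [h]; exact hiK))
    have hpkm : p ≠ kminus ii k := by
      intro hcon
      rcases kminus_spec ii k with h | h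
      · omega
      · exact heq (by rw [hcon]; exact h.2.2)
    have hEP : Efun A ii m k (kplus ii m p) =
        -(if k < kplus ii m p ∧ kplus ii m p < kplus ii m k
            then A (ii p) (ii k) else 0) := by
      rcases kplus_spec ii m p with h | h
      · rw [Efun_big A ii (show kplus ii m k < kplus ii m p by omega),
          if_neg (by omega), neg_zero]
      · rw [Efun_diffletter A ii (fun hc => heq (h.2.2.symm.trans hc))]
        by_cases hc : k < kplus ii m p ∧ kplus ii m p < kplus ii m k
        · rw [if_pos hc, if_pos hc, h.2.2]
        · rw [if_neg hc, if_neg hc]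
    rw [hEP, Efun_diffletter A ii heq,
      bcoef, if_neg hpkm, if_neg hpK]
    split_ifs <;> first | ring1 | (exfalso; omega)

lemma chain_sum_aux (ii : ℕ → Fin n) (m : ℕ) (F : ℕ → ℤ) :
    ∀ t j, 1 ≤ j → j ≤ m → m + 1 - j ≤ t →
    ∑ p ∈ (Finset.Icc j m).filter (fun p => ii p = ii j),
      (F (kplus ii m p) - F p) = F (m+1) - F j := by
  intro t
  induction t with
  | zero => intro j _ h2 h3; omega
  | succ t IH =>
    intro j hj1 hj2 hj3
    by_cases hJ : kplus ii m j ≤ m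
    · obtain ⟨hjJ, hJm, hiJ⟩ : j < kplus ii m j ∧ kplus ii m j ≤ m ∧
          ii (kplus ii m j) = ii j := by
        rcases kplus_spec ii m j with h | h
        · omega
        · exact h
      have hset : (Finset.Icc j m).filter (fun p => ii p = ii j) =
          insert j ((Finset.Icc (kplus ii m j) m).filter
            (fun p => ii p = ii (kplus ii m j))) := by
        ext x
        simp only [Finset.mem_filter, Finset.mem_insert, Finset.mem_Icc]
        constructor
        · rintro ⟨⟨hx1, hx2⟩, hx3⟩
          by_cases hxj : x = j
          · exact Or.inl hxj
          · exact Or.inr ⟨⟨kplus_le ii m (by omega) hx2 hx3, hx2⟩,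
              hx3.trans hiJ.symm⟩
        · rintro (rfl | ⟨⟨hx1, hx2⟩, hx3⟩)
          · exact ⟨⟨le_refl x, hj2⟩, rfl⟩
          · exact ⟨⟨by omega, hx2⟩, hx3.trans hiJ⟩
      have hnotmem : j ∉ (Finset.Icc (kplus ii m j) m).filter
          (fun p => ii p = ii (kplus ii m j)) := by
        intro hmem
        have := (Finset.mem_filter.mp hmem).1
        rw [Finset.mem_Icc] at this
        omega
      rw [hset, Finset.sum_insert hnotmem,
        IH (kplus ii m j) (by omega) hJm (by omega)]
      ring
    · have hJ1 : kplus ii m j = m + 1 := by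
        have := kplus_le_succ ii m j; omega
      have hset : (Finset.Icc j m).filter (fun p => ii p = ii j) = {j} := by
        ext x
        simp only [Finset.mem_filter, Finset.mem_Icc, Finset.mem_singleton]
        constructor
        · rintro ⟨⟨hx1, hx2⟩, hx3⟩
          by_contra hxj
          have := kplus_le ii m (show j < x by omega) hx2 hx3
          omega
        · rintro rfl
          exact ⟨⟨le_refl x, hj2⟩, rfl⟩
      rw [hset, Finset.sum_singleton, hJ1]

lemma chain_sum (ii : ℕ → Fin n) (m : ℕ) (F : ℕ → ℤ) {j : ℕ}
    (hj1 : 1 ≤ j) (hj2 : j ≤ m) :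
    ∑ p ∈ (Finset.Icc j m).filter (fun p => ii p = ii j),
      (F (kplus ii m p) - F p) = F (m+1) - F j :=
  chain_sum_aux ii m F (m+1) j hj1 hj2 (by omega)

/-- `∫_𝐢 𝐛^k = ε_k + ε_{k⁺} + ∑_{p=k+1}^{k⁺-1} a_{i_p i_k} ε_p` for `k ∈ 𝐞𝐱`. -/
theorem int_bvec {n m : ℕ} (hm : 1 ≤ m)
    (A : Fin n → Fin n → ℤ) (d : Fin n → ℤ)
    (hA : ∀ i, A i i = 2) (hd : ∀ i, 0 < d i)
    (hsym : ∀ i j, d i * A i j = d j * A j i)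
    (ii : ℕ → Fin n)
    (k : ℕ) (hk1 : 1 ≤ k) (hk2 : kplus ii m k ≤ m) :
    intMap ii m (bvec A ii m k) =
      eps m k + eps m (kplus ii m k)
        + ∑ p : Fin m, (if k < (p:ℕ)+1 ∧ (p:ℕ)+1 < kplus ii m k
            then A (ii ((p:ℕ)+1)) (ii k) else 0) • eps m ((p:ℕ)+1) := by
  obtain ⟨hkK, hKm, hiK⟩ : k < kplus ii m k ∧ kplus ii m k ≤ m ∧
      ii (kplus ii m k) = ii k := by
    rcases kplus_spec ii m k with h | h
    · omega
    · exact h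
  funext q
  have hq : (q:ℕ) < m := q.isLt
  have hL : intMap ii m (bvec A ii m k) q =
      ∑ p ∈ (Finset.Icc ((q:ℕ)+1) m).filter (fun p => ii p = ii ((q:ℕ)+1)),
        bcoef A ii m p k := by
    have step1 : intMap ii m (bvec A ii m k) q =
        ∑ p : Fin m, (if ((q:ℕ)+1 = (p:ℕ)+1 ∨ ((q:ℕ)+1 < (p:ℕ)+1 ∧
            ii ((q:ℕ)+1) = ii ((p:ℕ)+1)))
          then bcoef A ii m ((p:ℕ)+1) k else 0) := by
      rw [intMap, Finset.sum_apply]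
      refine Finset.sum_congr rfl (fun p _ => ?_)
      rw [Pi.smul_apply, smul_eq_mul, intE_apply ii m ((p:ℕ)+1) (by omega) q,
        mul_ite, mul_one, mul_zero]
      rfl
    have step2 : ∑ p ∈ Finset.Icc 1 m,
        (if ((q:ℕ)+1 = p ∨ ((q:ℕ)+1 < p ∧ ii ((q:ℕ)+1) = ii p))
          then bcoef A ii m p k else 0) =
        ∑ x ∈ Finset.range m,
          (if ((q:ℕ)+1 = x+1 ∨ ((q:ℕ)+1 < x+1 ∧ ii ((q:ℕ)+1) = ii (x+1)))
            then bcoef A ii m (x+1) k else 0) := by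
      rw [← Finset.Ico_add_one_right_eq_Icc, Finset.sum_Ico_eq_sum_range]
      have hmm : m + 1 - 1 = m := by omega
      rw [hmm]
      refine Finset.sum_congr rfl (fun x _ => ?_)
      rw [Nat.add_comm 1 x]
    rw [step1, Fin.sum_univ_eq_sum_range
      (fun x => if ((q:ℕ)+1 = x+1 ∨ ((q:ℕ)+1 < x+1 ∧ ii ((q:ℕ)+1) = ii (x+1)))
        then bcoef A ii m (x+1) k else 0) m, ← step2, ← Finset.sum_filter]
    congr 1
    ext x
    simp only [Finset.mem_filter, Finset.mem_Icc]
    constructor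
    · rintro ⟨⟨hx1, hx2⟩, (h | ⟨h1, h2⟩)⟩
      · exact ⟨⟨by omega, hx2⟩, by rw [← h]⟩
      · exact ⟨⟨by omega, hx2⟩, h2.symm⟩
    · rintro ⟨⟨hx1, hx2⟩, hx3⟩
      rcases eq_or_lt_of_le hx1 with h | h
      · exact ⟨⟨by omega, hx2⟩, Or.inl h⟩
      · exact ⟨⟨by omega, hx2⟩, Or.inr ⟨h, hx3.symm⟩⟩
  have hR : (eps m k + eps m (kplus ii m k)
        + ∑ p : Fin m, (if k < (p:ℕ)+1 ∧ (p:ℕ)+1 < kplus ii m k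
            then A (ii ((p:ℕ)+1)) (ii k) else 0) • eps m ((p:ℕ)+1)) q
      = (if (q:ℕ)+1 = k then (1:ℤ) else 0)
        + (if (q:ℕ)+1 = kplus ii m k then 1 else 0)
        + (if k < (q:ℕ)+1 ∧ (q:ℕ)+1 < kplus ii m k
            then A (ii ((q:ℕ)+1)) (ii k) else 0) := by
    rw [Pi.add_apply, Pi.add_apply, Finset.sum_apply]
    congr 1
    rw [Finset.sum_eq_single_of_mem q (Finset.mem_univ q) (fun p _ hpq => by
      rw [Pi.smul_apply, smul_eq_mul]
      have h0 : eps m ((p:ℕ)+1) q = 0 := by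
        refine if_neg (fun hcon => hpq ?_)
        exact Fin.ext (by omega)
      rw [h0, mul_zero])]
    rw [Pi.smul_apply, smul_eq_mul]
    have h1 : eps m ((q:ℕ)+1) q = 1 := if_pos rfl
    rw [h1, mul_one]
  rw [hL, Finset.sum_congr rfl (fun p hp => bcoef_eq A ii hk1 hk2
      (by have := (Finset.mem_filter.mp hp).1
          rw [Finset.mem_Icc] at this; omega)
      (by have := (Finset.mem_filter.mp hp).1
          rw [Finset.mem_Icc] at this; omega)),
    chain_sum ii m (Efun A ii m k) (show 1 ≤ (q:ℕ)+1 by omega)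
      (show (q:ℕ)+1 ≤ m by omega),
    Efun_big A ii (show kplus ii m k < m+1 by omega), zero_sub, hR, Efun]
  have hsplit : (if k ≤ (q:ℕ)+1 ∧ (q:ℕ)+1 ≤ kplus ii m k ∧ ii ((q:ℕ)+1) = ii k
      then (1:ℤ) else 0)
      = (if (q:ℕ)+1 = k then (1:ℤ) else 0)
        + (if (q:ℕ)+1 = kplus ii m k then 1 else 0) := by
    by_cases h1 : (q:ℕ)+1 = k
    · rw [if_pos h1, if_neg (show ¬(q:ℕ)+1 = kplus ii m k by omega),
        if_pos (⟨by omega, by omega, by rw [h1]⟩ :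
          k ≤ (q:ℕ)+1 ∧ (q:ℕ)+1 ≤ kplus ii m k ∧ ii ((q:ℕ)+1) = ii k)]
      norm_num
    · by_cases h2 : (q:ℕ)+1 = kplus ii m k
      · rw [if_pos (⟨by omega, by omega, by rw [h2]; exact hiK⟩ :
            k ≤ (q:ℕ)+1 ∧ (q:ℕ)+1 ≤ kplus ii m k ∧ ii ((q:ℕ)+1) = ii k),
          if_neg h1, if_pos h2]
        norm_num
      · have hno : ¬(k ≤ (q:ℕ)+1 ∧ (q:ℕ)+1 ≤ kplus ii m k ∧
            ii ((q:ℕ)+1) = ii k) := by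
          rintro ⟨ha, hb, hc⟩
          exact kplus_min ii (m := m) (k := k) (l := (q:ℕ)+1) (by omega) (by omega) (by omega) hc
        rw [if_neg h1, if_neg h2, if_neg hno]
        norm_num
  rw [hsplit]
  ring
end

section
/- For all $k,\ell\in\{1,\dots,m\}$ one has $\Phi_\mathbf{i}\big(\varphi'_\mathbf{i}(\partial_\mathbf{i}\varepsilon_k),\ \varphi'_\mathbf{i}(\partial_\mathbf{i}\varepsilon_\ell)\big)=-d_{i_k}$ if $k=\ell$, $=-(w_k\alpha_{i_k},\ w_\ell\alpha_{i_\ell})$ if $k<\ell$, and $=0$ if $k>\ell$. -/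
open Finset

variable {n : ℕ}

namespace S8

variable {n : ℕ} (A : Fin n → Fin n → ℤ) (ii : ℕ → Fin n)

lemma pairQP_eq (x : QvLat n) (lam : PLat n) :
    pairQP A x lam = ∑ a, x a * ((∑ b, A a b * lam.1 b) + lam.2 a) := by
  simp [pairQP, mul_add, Finset.sum_add_distrib, Finset.mul_sum, mul_assoc]

lemma pairQP_coroot_left (a : Fin n) (lam : PLat n) :
    pairQP A (coroot a) lam = (∑ b, A a b * lam.1 b) + lam.2 a := by
  simp [pairQP_eq, coroot, ite_mul]

lemma pairQP_alP_right (x : QvLat n) (a : Fin n) :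
    pairQP A x (alP a) = ∑ t, A t a * x t := by
  simp [pairQP_eq, alP, mul_ite]
  exact Finset.sum_congr rfl fun t _ => mul_comm _ _

lemma pairQP_coroot_alP (a c : Fin n) : pairQP A (coroot a) (alP c) = A a c := by
  simp [pairQP_coroot_left, alP, mul_ite]

lemma pairQP_coroot_omP (a c : Fin n) :
    pairQP A (coroot a) (omP c) = if a = c then 1 else 0 := by
  simp [pairQP_coroot_left, omP]

lemma pairQP_add_left (x y : QvLat n) (lam : PLat n) :
    pairQP A (x + y) lam = pairQP A x lam + pairQP A y lam := by
  simp [pairQP_eq, add_mul, Finset.sum_add_distrib]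

lemma pairQP_zero_left (lam : PLat n) : pairQP A 0 lam = 0 := by
  simp [pairQP_eq]

lemma pairQP_smul_left (c : ℤ) (x : QvLat n) (lam : PLat n) :
    pairQP A (c • x) lam = c * pairQP A x lam := by
  simp [pairQP_eq, Finset.mul_sum, mul_assoc]

lemma pairQP_neg_left (x : QvLat n) (lam : PLat n) :
    pairQP A (-x) lam = -pairQP A x lam := by
  simp [pairQP_eq, Finset.sum_neg_distrib]

lemma pairQP_sub_left (x y : QvLat n) (lam : PLat n) :
    pairQP A (x - y) lam = pairQP A x lam - pairQP A y lam := by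
  rw [sub_eq_add_neg, pairQP_add_left, pairQP_neg_left, sub_eq_add_neg]

lemma pairQP_sum_left {α : Type*} (s : Finset α) (f : α → QvLat n) (lam : PLat n) :
    pairQP A (∑ p ∈ s, f p) lam = ∑ p ∈ s, pairQP A (f p) lam := by
  classical
  induction s using Finset.cons_induction with
  | empty => simp [pairQP_zero_left]
  | cons a s ha ih => rw [Finset.sum_cons, Finset.sum_cons, pairQP_add_left, ih]

lemma pairQP_add_right (x : QvLat n) (lam mu : PLat n) :
    pairQP A x (lam + mu) = pairQP A x lam + pairQP A x mu := by
  simp [pairQP_eq, mul_add, Finset.sum_add_distrib]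
  ring

lemma pairQP_smul_right (c : ℤ) (x : QvLat n) (lam : PLat n) :
    pairQP A x (c • lam) = c * pairQP A x lam := by
  simp [pairQP_eq, Finset.mul_sum, mul_comm, mul_assoc, mul_left_comm, mul_add,
    Finset.sum_add_distrib]

lemma pairQP_sub_right (x : QvLat n) (lam mu : PLat n) :
    pairQP A x (lam - mu) = pairQP A x lam - pairQP A x mu := by
  rw [sub_eq_add_neg, pairQP_add_right, ← neg_one_smul ℤ mu, pairQP_smul_right]
  ring

lemma sQ_eq (a : Fin n) (x : QvLat n) :
    sQ A a x = x - (∑ t, A t a * x t) • coroot a := by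
  funext j
  by_cases h : j = a <;> simp [sQ, coroot, h]

lemma sP_eq (a : Fin n) (lam : PLat n) :
    sP A a lam = lam - ((∑ t, A a t * lam.1 t) + lam.2 a) • alP a := by
  refine Prod.ext ?_ ?_
  · funext j
    by_cases h : j = a <;> simp [sP, alP, h]
  · simp [sP, alP]

lemma sQ_coroot (a j : Fin n) :
    sQ A a (coroot j) = coroot j - (A j a) • coroot a := by
  have h : (∑ t, A t a * coroot j t) = A j a := by simp [coroot]
  rw [sQ_eq, h]

lemma sQ_coroot_self (hA : ∀ i, A i i = 2) (a : Fin n) :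
    sQ A a (coroot a) = -(coroot a) := by
  rw [sQ_coroot, hA]
  funext j; simp only [Pi.sub_apply, Pi.smul_apply, Pi.neg_apply, coroot, smul_eq_mul]
  split <;> norm_num

lemma sP_omP_ne {a c : Fin n} (h : a ≠ c) : sP A a (omP c) = omP c := by
  have hc : ((∑ t, A a t * (omP c).1 t) + (omP c).2 a) = 0 := by simp [omP, h]
  rw [sP_eq, hc]; simp

lemma sP_omP_self (a : Fin n) : sP A a (omP a) = omP a - alP a := by
  have hc : ((∑ t, A a t * (omP a).1 t) + (omP a).2 a) = 1 := by simp [omP]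
  rw [sP_eq, hc, one_smul]

lemma sP_alP_self (hA : ∀ i, A i i = 2) (a : Fin n) :
    sP A a (alP a) = -(alP a) := by
  have hc : ((∑ t, A a t * (alP a).1 t) + (alP a).2 a) = 2 := by simp [alP, hA]
  rw [sP_eq, hc, two_smul]; abel

lemma sQ_add (a : Fin n) (x y : QvLat n) :
    sQ A a (x + y) = sQ A a x + sQ A a y := by
  simp only [sQ_eq, Pi.add_apply, mul_add, Finset.sum_add_distrib, add_smul]; abel

lemma sQ_smul (a : Fin n) (c : ℤ) (x : QvLat n) :
    sQ A a (c • x) = c • sQ A a x := by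
  simp only [sQ_eq, Pi.smul_apply, smul_eq_mul, mul_left_comm, ← Finset.mul_sum,
    smul_sub, smul_smul]

lemma sP_add (a : Fin n) (lam mu : PLat n) :
    sP A a (lam + mu) = sP A a lam + sP A a mu := by
  simp only [sP_eq, Prod.fst_add, Prod.snd_add, Pi.add_apply, mul_add,
    Finset.sum_add_distrib, add_smul]
  abel

lemma sP_smul (a : Fin n) (c : ℤ) (lam : PLat n) :
    sP A a (c • lam) = c • sP A a lam := by
  simp only [sP_eq, Prod.smul_fst, Prod.smul_snd, Pi.smul_apply, smul_eq_mul,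
    mul_left_comm, ← Finset.mul_sum, ← mul_add, smul_sub, smul_smul]

lemma pair_s (hA : ∀ i, A i i = 2) (a : Fin n) (x : QvLat n) (lam : PLat n) :
    pairQP A (sQ A a x) (sP A a lam) = pairQP A x lam := by
  rw [sQ_eq, sP_eq]
  simp only [pairQP_sub_left, pairQP_sub_right, pairQP_smul_left, pairQP_smul_right]
  rw [pairQP_coroot_alP, hA, pairQP_coroot_left, pairQP_alP_right]
  ring

lemma wP_zero (lam : PLat n) : wP A ii 0 lam = lam := rfl
lemma wP_succ (l : ℕ) (lam : PLat n) :
    wP A ii (l+1) lam = wP A ii l (sP A (ii (l+1)) lam) := rfl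
lemma wQ_zero (x : QvLat n) : wQ A ii 0 x = x := rfl
lemma wQ_succ (l : ℕ) (x : QvLat n) :
    wQ A ii (l+1) x = wQ A ii l (sQ A (ii (l+1)) x) := rfl

lemma wQ_add (l : ℕ) (x y : QvLat n) :
    wQ A ii l (x + y) = wQ A ii l x + wQ A ii l y := by
  induction l generalizing x y with
  | zero => rfl
  | succ l ih => rw [wQ_succ, wQ_succ, wQ_succ, sQ_add, ih]

lemma wQ_smul (l : ℕ) (c : ℤ) (x : QvLat n) :
    wQ A ii l (c • x) = c • wQ A ii l x := by
  induction l generalizing x with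
  | zero => rfl
  | succ l ih => rw [wQ_succ, wQ_succ, sQ_smul, ih]

lemma wQ_neg (l : ℕ) (x : QvLat n) : wQ A ii l (-x) = -(wQ A ii l x) := by
  have := wQ_smul A ii l (-1) x
  simpa using this

lemma wQ_sub (l : ℕ) (x y : QvLat n) :
    wQ A ii l (x - y) = wQ A ii l x - wQ A ii l y := by
  rw [sub_eq_add_neg, wQ_add, wQ_neg, sub_eq_add_neg]

lemma wP_add (l : ℕ) (lam mu : PLat n) :
    wP A ii l (lam + mu) = wP A ii l lam + wP A ii l mu := by
  induction l generalizing lam mu with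
  | zero => rfl
  | succ l ih => rw [wP_succ, wP_succ, wP_succ, sP_add, ih]

lemma wP_smul (l : ℕ) (c : ℤ) (lam : PLat n) :
    wP A ii l (c • lam) = c • wP A ii l lam := by
  induction l generalizing lam with
  | zero => rfl
  | succ l ih => rw [wP_succ, wP_succ, sP_smul, ih]

lemma wP_neg (l : ℕ) (lam : PLat n) : wP A ii l (-lam) = -(wP A ii l lam) := by
  have := wP_smul A ii l (-1) lam
  simpa using this

lemma wP_sub (l : ℕ) (lam mu : PLat n) :
    wP A ii l (lam - mu) = wP A ii l lam - wP A ii l mu := by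
  rw [sub_eq_add_neg, wP_add, wP_neg, sub_eq_add_neg]

lemma pair_w (hA : ∀ i, A i i = 2) (l : ℕ) (x : QvLat n) (lam : PLat n) :
    pairQP A (wQ A ii l x) (wP A ii l lam) = pairQP A x lam := by
  induction l generalizing x lam with
  | zero => rfl
  | succ l ih => rw [wQ_succ, wP_succ, ih, pair_s A hA]

lemma wP_omP_fix (c : Fin n) (j' j : ℕ) (h : j' ≤ j)
    (hne : ∀ t, j' < t → t ≤ j → ii t ≠ c) :
    wP A ii j (omP c) = wP A ii j' (omP c) := by
  induction j, h using Nat.le_induction with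
  | base => rfl
  | succ j hj ih =>
    rw [wP_succ, sP_omP_ne A (hne (j+1) (by omega) (by omega))]
    exact ih fun t h1 h2 => hne t h1 (by omega)

lemma kminus_spec (k : ℕ) :
    kminus ii k ∈ ({l | 1 ≤ l ∧ l < k ∧ ii l = ii k} ∪ {0} : Set ℕ) := by
  apply Nat.sSup_mem ⟨0, Or.inr rfl⟩
  exact ⟨k, by rintro x (⟨_, hx, _⟩ | rfl); exacts [le_of_lt hx, Nat.zero_le k]⟩

lemma kminus_lt {k : ℕ} (hk : 1 ≤ k) : kminus ii k < k := by
  rcases kminus_spec ii k with ⟨_, h, _⟩ | h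
  · exact h
  · simp only [Set.mem_singleton_iff] at h
    omega

lemma kminus_ub {k t : ℕ} (h1 : 1 ≤ t) (h2 : t < k) (h3 : ii t = ii k) :
    t ≤ kminus ii k := by
  apply le_csSup
  · exact ⟨k, by rintro x (⟨_, hx, _⟩ | rfl); exacts [le_of_lt hx, Nat.zero_le k]⟩
  · exact Or.inl ⟨h1, h2, h3⟩

lemma kminus_ne {k t : ℕ} (h1 : kminus ii k < t) (h2 : t < k) : ii t ≠ ii k :=
  fun h => absurd (kminus_ub ii (by omega) h2 h) (by omega)

lemma kminus_ii {k : ℕ} (h : 1 ≤ kminus ii k) : ii (kminus ii k) = ii k := by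
  rcases kminus_spec ii k with ⟨_, _, h3⟩ | h0
  · exact h3
  · simp only [Set.mem_singleton_iff] at h0
    omega

lemma L4 (hA : ∀ i, A i i = 2) {k : ℕ} (hk : 1 ≤ k) :
    wP A ii k (omP (ii k))
      = wP A ii (kminus ii k) (omP (ii k)) + wP A ii k (alP (ii k)) := by
  obtain ⟨k', rfl⟩ : ∃ k', k = k'+1 := ⟨k-1, by omega⟩
  have hkm : kminus ii (k'+1) ≤ k' := by have := kminus_lt ii hk; omega
  have e1 : wP A ii (k'+1) (omP (ii (k'+1)))
      = wP A ii k' (omP (ii (k'+1))) - wP A ii k' (alP (ii (k'+1))) := by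
    rw [wP_succ, sP_omP_self, wP_sub]
  have e2 : wP A ii (k'+1) (alP (ii (k'+1))) = -(wP A ii k' (alP (ii (k'+1)))) := by
    rw [wP_succ, sP_alP_self A hA, wP_neg]
  have e3 : wP A ii k' (omP (ii (k'+1)))
      = wP A ii (kminus ii (k'+1)) (omP (ii (k'+1))) := by
    apply wP_omP_fix A ii _ _ _ hkm
    intro t h1 h2
    exact kminus_ne ii h1 (by omega)
  rw [e1, e2, e3]; abel

lemma L5 (hA : ∀ i, A i i = 2) {k Q : ℕ} (hQ : 1 ≤ Q)
    (h1 : kminus ii k < Q) (h2 : Q ≤ k) :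
    pairQP A (wQ A ii Q (coroot (ii Q))) (wP A ii (kminus ii k) (omP (ii k)))
      = if Q = k then -1 else 0 := by
  obtain ⟨q, rfl⟩ : ∃ q, Q = q+1 := ⟨Q-1, by omega⟩
  have e1 : wQ A ii (q+1) (coroot (ii (q+1)))
      = -(wQ A ii q (coroot (ii (q+1)))) := by
    rw [wQ_succ, sQ_coroot_self A hA, wQ_neg]
  have e2 : wP A ii (kminus ii k) (omP (ii k)) = wP A ii q (omP (ii k)) := by
    refine (wP_omP_fix A ii _ _ _ (by omega) ?_).symm
    intro t ht1 ht2
    exact kminus_ne ii ht1 (by omega)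
  rw [e1, e2, pairQP_neg_left, pair_w A ii hA, pairQP_coroot_omP]
  by_cases h : q + 1 = k
  · subst h; simp
  · have hne : ii (q+1) ≠ ii k := kminus_ne ii h1 (by omega)
    simp [h, hne]

lemma TS (hA : ∀ i, A i i = 2) (d : Fin n → ℤ) {q k : ℕ} (h : q ≤ k) :
    (d (ii q)) • wQ A ii k (coroot (ii q))
      = (d (ii q)) • wQ A ii q (coroot (ii q))
        + ∑ p ∈ Finset.Icc (q+1) k,
            (d (ii q) * A (ii q) (ii p)) • wQ A ii p (coroot (ii p)) := by
  induction k, h using Nat.le_induction with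
  | base => rw [Finset.Icc_eq_empty (by omega)]; simp
  | succ k hk ih =>
    rw [Finset.sum_Icc_succ_top (by omega : q+1 ≤ k+1)]
    have e1 : wQ A ii (k+1) (coroot (ii q))
        = wQ A ii k (coroot (ii q))
          - (A (ii q) (ii (k+1))) • wQ A ii k (coroot (ii (k+1))) := by
      rw [wQ_succ, sQ_coroot, wQ_sub, wQ_smul]
    have e2 : wQ A ii (k+1) (coroot (ii (k+1)))
        = -(wQ A ii k (coroot (ii (k+1)))) := by
      rw [wQ_succ, sQ_coroot_self A hA, wQ_neg]
    rw [e1, e2, smul_sub, smul_smul, ih, smul_neg]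
    abel

lemma C1 (hA : ∀ i, A i i = 2) (d : Fin n → ℤ) {Q k : ℕ} (h : Q ≤ k) :
    d (ii Q) * pairQP A (wQ A ii Q (coroot (ii Q))) (wP A ii k (alP (ii k)))
      + ∑ P ∈ Finset.Icc (Q+1) k,
          (d (ii Q) * A (ii Q) (ii P)) *
            pairQP A (wQ A ii P (coroot (ii P))) (wP A ii k (alP (ii k)))
      = d (ii Q) * A (ii Q) (ii k) := by
  have h0 := congrArg (fun x => pairQP A x (wP A ii k (alP (ii k)))) (TS A ii hA d h)
  simp only [pairQP_smul_left, pairQP_add_left, pairQP_sum_left] at h0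
  rw [pair_w A ii hA, pairQP_coroot_alP] at h0
  linarith

lemma sum_eps_smul {M : Type*} [AddCommGroup M] [Module ℤ M] {m k : ℕ}
    (hk1 : 1 ≤ k) (hk2 : k ≤ m) (f : ℕ → M) :
    (∑ j : Fin m, eps m k j • f ((j:ℕ)+1)) = f k := by
  rw [Finset.sum_eq_single (⟨k-1, by omega⟩ : Fin m)]
  · have h : (k-1)+1 = k := by omega
    simp [eps, h]
  · intro b _ hb
    have : (b:ℕ)+1 ≠ k := by
      intro hc; apply hb; exact Fin.ext (by simp; omega)
    simp [eps, this]
  · intro h; exact absurd (Finset.mem_univ _) h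

lemma phiE'_apply (m l : ℕ) (j : Fin m) :
    phiE' A ii m l j
      = -(if (j:ℕ)+1 ≤ l then
          pairQP A (wQ A ii ((j:ℕ)+1) (coroot (ii ((j:ℕ)+1)))) (wP A ii l (omP (ii l)))
        else 0) := by
  simp only [phiE', Pi.neg_apply, Finset.sum_apply, Pi.smul_apply, smul_eq_mul]
  congr 1
  rw [Finset.sum_eq_single j]
  · simp [eps]
  · intro b _ hb
    have : ¬((j:ℕ)+1 = (b:ℕ)+1) := by
      intro hc; apply hb; exact Fin.ext (by omega)
    simp [eps, this, show (j:ℕ) ≠ (b:ℕ) from fun hc => hb (Fin.ext hc.symm)]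
  · intro h; exact absurd (Finset.mem_univ _) h

lemma phiE'_zero (m : ℕ) : phiE' A ii m 0 = 0 := by
  funext j
  simp [phiE'_apply]

lemma V_eq {m k : ℕ} (hk1 : 1 ≤ k) (hk2 : k ≤ m) :
    phiMap' A ii m (derMap ii m (eps m k))
      = phiE' A ii m k - phiE' A ii m (kminus ii k) := by
  have h1 : derMap ii m (eps m k) = derE ii m k := sum_eps_smul hk1 hk2 _
  rw [h1]
  unfold derE
  have h2 : phiMap' A ii m (eps m k - eps m (kminus ii k))
      = phiMap' A ii m (eps m k) - phiMap' A ii m (eps m (kminus ii k)) := by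
    unfold phiMap'
    rw [← Finset.sum_sub_distrib]
    exact Finset.sum_congr rfl fun x _ => by rw [Pi.sub_apply, sub_smul]
  rw [h2]
  have h3 : phiMap' A ii m (eps m k) = phiE' A ii m k := sum_eps_smul hk1 hk2 _
  have h4 : phiMap' A ii m (eps m (kminus ii k)) = phiE' A ii m (kminus ii k) := by
    by_cases hkm : 1 ≤ kminus ii k
    · exact sum_eps_smul hkm (by have := kminus_lt ii hk1; omega) _
    · have h0 : kminus ii k = 0 := by omega
      rw [h0, phiE'_zero]
      unfold phiMap'
      have : ∀ j : Fin m, eps m 0 j = 0 := fun j => by simp [eps]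
      simp [this]
  rw [h3, h4]

lemma VCoord (hA : ∀ i, A i i = 2) {m k : ℕ} (hk1 : 1 ≤ k) (hk2 : k ≤ m)
    (j : Fin m) :
    phiMap' A ii m (derMap ii m (eps m k)) j
      = (if (j:ℕ)+1 ≤ k then
          -(pairQP A (wQ A ii ((j:ℕ)+1) (coroot (ii ((j:ℕ)+1))))
            (wP A ii k (alP (ii k))))
        else 0)
        + (if (j:ℕ)+1 = k then 1 else 0) := by
  rw [V_eq A ii hk1 hk2, Pi.sub_apply, phiE'_apply, phiE'_apply]
  have hkm := kminus_lt ii hk1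
  by_cases hJk : (j:ℕ)+1 ≤ k
  · rw [if_pos hJk, if_pos hJk]
    by_cases hJm : (j:ℕ)+1 ≤ kminus ii k
    · have hk1' : 1 ≤ kminus ii k := by omega
      rw [if_pos hJm, kminus_ii ii hk1']
      rw [L4 A ii hA hk1, pairQP_add_right]
      have hJne : ¬((j:ℕ)+1 = k) := by omega
      rw [if_neg hJne]
      ring
    · rw [if_neg hJm]
      rw [L4 A ii hA hk1, pairQP_add_right,
        L5 A ii hA (by omega) (by omega) hJk]
      by_cases h : (j:ℕ)+1 = k
      · rw [if_pos h, if_pos h]; ring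
      · rw [if_neg h, if_neg h]; ring
  · have hJm : ¬((j:ℕ)+1 ≤ kminus ii k) := by omega
    have hJne : ¬((j:ℕ)+1 = k) := by omega
    rw [if_neg hJk, if_neg hJk, if_neg hJm, if_neg hJne]
    ring

lemma column_nat (hA : ∀ i, A i i = 2) (d : Fin n → ℤ) {m k q : ℕ}
    (hk1 : 1 ≤ k) (hk2 : k ≤ m) (hq : q < m) :
    (∑ p ∈ Finset.range m,
      ((if p+1 ≤ k then
          -(pairQP A (wQ A ii (p+1) (coroot (ii (p+1)))) (wP A ii k (alP (ii k))))
        else 0)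
        + (if p+1 = k then 1 else 0)) *
      (if p = q then -(d (ii (p+1)))
       else if q < p then -(d (ii (q+1)) * A (ii (q+1)) (ii (p+1))) else 0))
      = if q+1 = k then d (ii k) else 0 := by
  set b : ℕ → ℤ := fun P =>
    pairQP A (wQ A ii P (coroot (ii P))) (wP A ii k (alP (ii k))) with hb
  set φ : ℕ → ℤ := fun p =>
    if p = q then -(d (ii (p+1)))
    else if q < p then -(d (ii (q+1)) * A (ii (q+1)) (ii (p+1))) else 0 with hφ
  have hsplit : ∀ p, ((if p+1 ≤ k then -(b p.succ) else 0) + (if p+1 = k then 1 else 0)) * φ p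
      = (if p+1 ≤ k then -(b (p+1)) else 0) * φ p + (if p+1 = k then 1 else 0) * φ p :=
    fun p => add_mul _ _ _
  calc (∑ p ∈ Finset.range m,
      ((if p+1 ≤ k then -(b (p+1)) else 0) + (if p+1 = k then 1 else 0)) * φ p)
      = (∑ p ∈ Finset.range m, (if p+1 ≤ k then -(b (p+1)) else 0) * φ p)
        + ∑ p ∈ Finset.range m, (if p+1 = k then 1 else 0) * φ p := by
        rw [← Finset.sum_add_distrib]
        exact Finset.sum_congr rfl fun p _ => add_mul _ _ _
    _ = if q+1 = k then d (ii k) else 0 := by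
        have hf2 : (∑ p ∈ Finset.range m, (if p+1 = k then 1 else 0) * φ p)
            = φ (k-1) := by
          rw [Finset.sum_eq_single (k-1)]
          · rw [if_pos (by omega), one_mul]
          · intro p _ hp
            rw [if_neg (by omega), zero_mul]
          · intro h
            exact absurd (Finset.mem_range.mpr (by omega)) h
        have hf1 : (∑ p ∈ Finset.range m, (if p+1 ≤ k then -(b (p+1)) else 0) * φ p)
            = if q+1 ≤ k then d (ii (q+1)) * A (ii (q+1)) (ii k) else 0 := by
          have hsub : Finset.Icc q (k-1) ⊆ Finset.range m := by
            intro x hx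
            rw [Finset.mem_Icc] at hx
            exact Finset.mem_range.mpr (by omega)
          have hvan : ∀ p ∈ Finset.range m, p ∉ Finset.Icc q (k-1) →
              (if p+1 ≤ k then -(b (p+1)) else 0) * φ p = 0 := by
            intro p _ hp
            rw [Finset.mem_Icc] at hp
            rcases lt_or_ge p q with h | h
            · have h1 : ¬(p = q) := by omega
              have h2 : ¬(q < p) := by omega
              rw [hφ]; simp only [h1, h2, if_false]; rw [mul_zero]
            · have h3 : ¬(p+1 ≤ k) := by omega
              rw [if_neg h3, zero_mul]
          rw [← Finset.sum_subset hsub hvan]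
          by_cases hqk : q+1 ≤ k
          · rw [if_pos hqk]
            rw [Finset.Icc_eq_cons_Ioc (by omega : q ≤ k-1), Finset.sum_cons]
            have hφq : φ q = -(d (ii (q+1))) := by
              simp only [hφ]; norm_num
            have hfq : (if q+1 ≤ k then -(b (q+1)) else 0) * φ q
                = d (ii (q+1)) * b (q+1) := by
              rw [if_pos hqk, hφq]; ring
            have hrest : (∑ p ∈ Finset.Ioc q (k-1),
                (if p+1 ≤ k then -(b (p+1)) else 0) * φ p)
                = ∑ p ∈ Finset.Ioc q (k-1),
                    (d (ii (q+1)) * A (ii (q+1)) (ii (p+1))) * b (p+1) := by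
              apply Finset.sum_congr rfl
              intro p hp
              rw [Finset.mem_Ioc] at hp
              rw [if_pos (by omega), hφ]
              simp only [if_neg (by omega : ¬(p = q)), if_pos hp.1]
              ring
            rw [hfq, hrest]
            have hmap : (∑ p ∈ Finset.Ioc q (k-1),
                (d (ii (q+1)) * A (ii (q+1)) (ii (p+1))) * b (p+1))
                = ∑ P ∈ Finset.Icc (q+1+1) k,
                    (d (ii (q+1)) * A (ii (q+1)) (ii P)) * b P := by
              refine Finset.sum_nbij' (fun p => p+1) (fun P => P-1) ?_ ?_ ?_ ?_ ?_
              · intro p hp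
                rw [Finset.mem_Ioc] at hp; rw [Finset.mem_Icc]; omega
              · intro P hP
                rw [Finset.mem_Icc] at hP; rw [Finset.mem_Ioc]; omega
              · intro p _; omega
              · intro P hP
                rw [Finset.mem_Icc] at hP; omega
              · intro p _; rfl
            rw [hmap]
            have := C1 A ii hA d (by omega : q+1 ≤ k)
            rw [hb]
            linarith
          · rw [if_neg hqk, Finset.Icc_eq_empty (by omega), Finset.sum_empty]
        rw [hf1, hf2]
        by_cases h1 : q+1 = k
        · have hφk : φ (k-1) = -(d (ii k)) := by
            simp only [hφ]
            rw [if_pos (show k-1 = q by omega), show k-1+1 = k from by omega]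
          rw [if_pos (show q+1 ≤ k by omega), if_pos h1, hφk,
            show ii (q+1) = ii k from by rw [h1], hA]
          ring
        · by_cases h2 : q+1 ≤ k
          · have hφk : φ (k-1)
                = -(d (ii (q+1)) * A (ii (q+1)) (ii (k-1+1))) := by
              simp only [hφ]
              rw [if_neg (by omega), if_pos (by omega)]
            rw [if_pos h2, if_neg h1, hφk, show k-1+1 = k from by omega]
            ring
          · have hφk : φ (k-1) = 0 := by
              simp only [hφ]
              rw [if_neg (by omega), if_neg (by omega)]
            rw [if_neg h2, if_neg h1, hφk]
            ring

lemma wP_snd (l : ℕ) (lam : PLat n) : (wP A ii l lam).2 = lam.2 := by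
  induction l generalizing lam with
  | zero => rfl
  | succ l ih => rw [wP_succ]; exact ih _

lemma DTstep (d : Fin n → ℤ) (hsym : ∀ i j, d i * A i j = d j * A j i)
    (a : Fin n) (lam : PLat n) (h2 : lam.2 = 0) :
    (fun j => d j * (sP A a lam).1 j) = sQ A a (fun j => d j * lam.1 j) := by
  funext j
  by_cases h : j = a
  · subst h
    simp only [sP, sQ, eq_self_iff_true, if_true]
    have hz : lam.2 j = 0 := by rw [h2]; rfl
    rw [hz, add_zero, mul_sub]
    have hs : d j * ∑ t, A j t * lam.1 t = ∑ t, A t j * (d t * lam.1 t) := by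
      rw [Finset.mul_sum]
      apply Finset.sum_congr rfl
      intro t _
      calc d j * (A j t * lam.1 t) = (d j * A j t) * lam.1 t := by ring
        _ = (d t * A t j) * lam.1 t := by rw [hsym]
        _ = A t j * (d t * lam.1 t) := by ring
    rw [hs]
  · simp only [sP, sQ, if_neg h]

lemma DT (d : Fin n → ℤ) (hsym : ∀ i j, d i * A i j = d j * A j i)
    (K : ℕ) (lam : PLat n) (h2 : lam.2 = 0) :
    (fun j => d j * (wP A ii K lam).1 j) = wQ A ii K (fun j => d j * lam.1 j) := by
  induction K generalizing lam with
  | zero => rfl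
  | succ K ih =>
    rw [wP_succ, ih _ (by rw [show (sP A (ii (K+1)) lam).2 = lam.2 from rfl, h2]),
      DTstep A d hsym _ _ h2, wQ_succ]

lemma pairAl_eq (d : Fin n → ℤ) (mu lam : PLat n) :
    pairAl A d mu lam = pairQP A (fun j => d j * mu.1 j) lam := by
  rw [pairQP_eq]
  unfold pairAl
  apply Finset.sum_congr rfl
  intro j _
  rw [pairQP_coroot_left]
  ring

lemma pairAl_wP (d : Fin n → ℤ) (hsym : ∀ i j, d i * A i j = d j * A j i)
    (K : ℕ) (lam : PLat n) :
    pairAl A d (wP A ii K (alP (ii K))) lam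
      = d (ii K) * pairQP A (wQ A ii K (coroot (ii K))) lam := by
  rw [pairAl_eq, DT A ii d hsym K (alP (ii K)) rfl]
  have h3 : (fun j => d j * (alP (ii K)).1 j) = (d (ii K)) • coroot (ii K) := by
    funext j
    by_cases h : j = ii K <;> simp [alP, coroot, h]
  rw [h3, wQ_smul, pairQP_smul_left]


end S8

open S8

/-- values of `Φ_𝐢` on the vectors `φ'_𝐢(∂_𝐢 ε_k)`. -/
theorem Phi_phi'_der {n m : ℕ} (hm : 1 ≤ m)
    (A : Fin n → Fin n → ℤ) (d : Fin n → ℤ)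
    (hA : ∀ i, A i i = 2) (hd : ∀ i, 0 < d i)
    (hsym : ∀ i j, d i * A i j = d j * A j i)
    (ii : ℕ → Fin n)
    (k : ℕ) (hk1 : 1 ≤ k) (hk2 : k ≤ m)
    (l : ℕ) (hl1 : 1 ≤ l) (hl2 : l ≤ m) :
    PhiF A d ii m (phiMap' A ii m (derMap ii m (eps m k)))
        (phiMap' A ii m (derMap ii m (eps m l))) =
      if k = l then -(d (ii k))
      else if k < l then
        -(pairAl A d (wP A ii k (alP (ii k))) (wP A ii l (alP (ii l))))
      else 0 := by
  set Vk := phiMap' A ii m (derMap ii m (eps m k)) with hVk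
  set Vl := phiMap' A ii m (derMap ii m (eps m l)) with hVl
  have hcol : ∀ q : Fin m, (∑ p : Fin m, Vk p *
      (if (p:ℕ) = (q:ℕ) then -(d (ii ((p:ℕ)+1)))
       else if (q:ℕ) < (p:ℕ) then
         -(d (ii ((q:ℕ)+1)) * A (ii ((q:ℕ)+1)) (ii ((p:ℕ)+1)))
       else 0))
      = if (q:ℕ)+1 = k then d (ii k) else 0 := by
    intro q
    set F : ℕ → ℤ := fun P =>
            ((if P+1 ≤ k then
                -(pairQP A (wQ A ii (P+1) (coroot (ii (P+1))))
                  (wP A ii k (alP (ii k))))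
              else 0)
              + (if P+1 = k then 1 else 0)) *
            (if P = (q:ℕ) then -(d (ii (P+1)))
             else if (q:ℕ) < P then
               -(d (ii ((q:ℕ)+1)) * A (ii ((q:ℕ)+1)) (ii (P+1)))
             else 0) with hF
    have e : ∀ p : Fin m, Vk p *
        (if (p:ℕ) = (q:ℕ) then -(d (ii ((p:ℕ)+1)))
         else if (q:ℕ) < (p:ℕ) then
           -(d (ii ((q:ℕ)+1)) * A (ii ((q:ℕ)+1)) (ii ((p:ℕ)+1)))
         else 0)
        = F ((p:ℕ)) := by
      intro p
      rw [hF]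
      dsimp only
      rw [hVk, VCoord A ii hA hk1 hk2 p]
    rw [Finset.sum_congr rfl (fun p _ => e p), Fin.sum_univ_eq_sum_range F m]
    rw [hF]
    exact column_nat A ii hA d hk1 hk2 q.isLt
  have hswap : PhiF A d ii m Vk Vl = ∑ q : Fin m, Vl q * (∑ p : Fin m, Vk p *
      (if (p:ℕ) = (q:ℕ) then -(d (ii ((p:ℕ)+1)))
       else if (q:ℕ) < (p:ℕ) then
         -(d (ii ((q:ℕ)+1)) * A (ii ((q:ℕ)+1)) (ii ((p:ℕ)+1)))
       else 0)) := by
    unfold PhiF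
    rw [Finset.sum_comm]
    apply Finset.sum_congr rfl
    intro q _
    rw [Finset.mul_sum]
    apply Finset.sum_congr rfl
    intro p _
    ring
  rw [hswap]
  have hsingle : (∑ q : Fin m, Vl q * (if (q:ℕ)+1 = k then d (ii k) else 0))
      = Vl ⟨k-1, by omega⟩ * d (ii k) := by
    rw [Finset.sum_eq_single (⟨k-1, by omega⟩ : Fin m)]
    · rw [if_pos (by simp; omega)]
    · intro q _ hq
      have : ¬((q:ℕ)+1 = k) := by
        intro hc; apply hq; exact Fin.ext (by simp; omega)
      rw [if_neg this, mul_zero]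
    · intro h; exact absurd (Finset.mem_univ _) h
  calc (∑ q : Fin m, Vl q * (∑ p : Fin m, Vk p * _))
      = ∑ q : Fin m, Vl q * (if (q:ℕ)+1 = k then d (ii k) else 0) :=
        Finset.sum_congr rfl fun q _ => by rw [hcol q]
    _ = Vl ⟨k-1, by omega⟩ * d (ii k) := hsingle
    _ = _ := by
        rw [hVl, VCoord A ii hA hl1 hl2 ⟨k-1, by omega⟩]
        have hval : ((⟨k-1, by omega⟩ : Fin m) : ℕ) = k - 1 := rfl
        rw [hval, show k-1+1 = k from by omega]
        by_cases hkl : k = l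
        · subst hkl
          rw [if_pos le_rfl, pair_w A ii hA, pairQP_coroot_alP, hA]
          norm_num
        · rw [if_neg hkl]
          by_cases hlt : k < l
          · rw [if_pos hlt, if_pos (le_of_lt hlt), if_neg hkl,
              pairAl_wP A ii d hsym]
            ring
          · rw [if_neg hlt, if_neg (by omega : ¬(k ≤ l)), if_neg hkl]
            ring
end

section
/- For all $k,\ell\in\{1,\dots,m\}$ one has $\Lambda_\mathbf{i}\big(\varphi'_\mathbf{i}(\varepsilon_k),\ \varphi'_\mathbf{i}(\varepsilon_\ell)\big)=(w_k\omega_{i_k}-\omega_{i_k},\ \omega_{i_\ell}+w_\ell\omega_{i_\ell})$ if $k\le\ell$, and $=(\omega_{i_\ell}-w_\ell\omega_{i_\ell},\ w_k\omega_{i_k}+\omega_{i_k})$ if $k>\ell$. -/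
open Finset

variable {n : ℕ}

section Aux
variable {n : ℕ} (A : Fin n → Fin n → ℤ) (d : Fin n → ℤ) (ii : ℕ → Fin n)

lemma pairQP_coroot (j : Fin n) (lam : PLat n) :
    pairQP A (coroot j) lam = (∑ b, A j b * lam.1 b) + lam.2 j := by
  simp [pairQP, coroot, ite_mul, Finset.sum_ite_eq']

lemma pairQP_zero₂ (x : QvLat n) : pairQP A x (0 : PLat n) = 0 := by
  simp [pairQP]

lemma pairQP_add₂ (x : QvLat n) (lam mu : PLat n) :
    pairQP A x (lam + mu) = pairQP A x lam + pairQP A x mu := by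
  simp [pairQP, mul_add, Finset.sum_add_distrib]; ring

lemma pairQP_neg₂ (x : QvLat n) (lam : PLat n) :
    pairQP A x (-lam) = -pairQP A x lam := by
  simp [pairQP, Finset.sum_add_distrib, ← Finset.sum_neg_distrib]; ring

lemma pairQP_sub₂ (x : QvLat n) (lam mu : PLat n) :
    pairQP A x (lam - mu) = pairQP A x lam - pairQP A x mu := by
  rw [sub_eq_add_neg, pairQP_add₂, pairQP_neg₂]; ring

lemma pairQP_smul₂ (x : QvLat n) (c : ℤ) (lam : PLat n) :
    pairQP A x (c • lam) = c * pairQP A x lam := by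
  simp only [pairQP, Prod.smul_fst, Prod.smul_snd, Pi.smul_apply, smul_eq_mul,
    mul_add, Finset.mul_sum]
  congr 1
  · apply Finset.sum_congr rfl; intro a _
    apply Finset.sum_congr rfl; intro b _; ring
  · apply Finset.sum_congr rfl; intro a _; ring

lemma pairQP_sum₂ (x : QvLat n) (s : Finset ℕ) (f : ℕ → PLat n) :
    pairQP A x (∑ b ∈ s, f b) = ∑ b ∈ s, pairQP A x (f b) := by
  classical
  induction s using Finset.induction with
  | empty => simp [pairQP_zero₂]
  | insert _ _ h ih => rw [Finset.sum_insert h, Finset.sum_insert h, pairQP_add₂, ih]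

lemma pairQP_smul₁ (x : QvLat n) (c : ℤ) (lam : PLat n) :
    pairQP A (c • x) lam = c * pairQP A x lam := by
  simp only [pairQP, Pi.smul_apply, smul_eq_mul, mul_add, Finset.mul_sum]
  congr 1
  · apply Finset.sum_congr rfl; intro a _
    apply Finset.sum_congr rfl; intro b _; ring
  · apply Finset.sum_congr rfl; intro a _; ring

lemma pairQP_neg₁ (x : QvLat n) (lam : PLat n) :
    pairQP A (-x) lam = -pairQP A x lam := by
  simp [pairQP, Finset.sum_add_distrib, ← Finset.sum_neg_distrib]; ring

lemma pairQP_sub₁ (x y : QvLat n) (lam : PLat n) :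
    pairQP A (x - y) lam = pairQP A x lam - pairQP A y lam := by
  simp [pairQP, sub_mul, Finset.sum_sub_distrib]; ring

lemma pairQP_coroot_alP (j j' : Fin n) : pairQP A (coroot j) (alP j') = A j j' := by
  simp [pairQP_coroot, alP, mul_ite, Finset.sum_ite_eq']

lemma pairQP_coroot_omP (j j' : Fin n) :
    pairQP A (coroot j) (omP j') = if j = j' then 1 else 0 := by
  simp [pairQP_coroot, omP]

lemma pairQP_x_alP (x : QvLat n) (j : Fin n) :
    pairQP A x (alP j) = ∑ a, x a * A a j := by
  simp [pairQP, alP, mul_ite, Finset.sum_ite_eq']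

lemma sP_eq (i : Fin n) (lam : PLat n) :
    sP A i lam = lam - pairQP A (coroot i) lam • alP i := by
  ext j
  · simp only [sP, pairQP_coroot, alP, Prod.fst_sub, Pi.sub_apply, Prod.smul_fst,
      Pi.smul_apply, smul_eq_mul, mul_ite, mul_one, mul_zero]
    split <;> simp_all
  · simp [sP, alP]

lemma sQ_eq (i : Fin n) (x : QvLat n) :
    sQ A i x = x - (∑ k, A k i * x k) • coroot i := by
  funext j
  simp only [sQ, coroot, Pi.sub_apply, Pi.smul_apply, smul_eq_mul, mul_ite, mul_one,
    mul_zero]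
  split <;> simp_all

end Aux
section Aux2
variable {n : ℕ} (A : Fin n → Fin n → ℤ) (d : Fin n → ℤ) (ii : ℕ → Fin n)

lemma sQ_coroot_self (hA : ∀ i, A i i = 2) (i : Fin n) :
    sQ A i (coroot i) = -(coroot i) := by
  funext j
  simp only [sQ, coroot, Pi.neg_apply, mul_ite, mul_one, mul_zero, Finset.sum_ite_eq']
  split
  · simp_all [hA]
  · simp_all

lemma pair_sQ_sP (hA : ∀ i, A i i = 2) (i : Fin n) (x : QvLat n) (lam : PLat n) :
    pairQP A (sQ A i x) (sP A i lam) = pairQP A x lam := by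
  have hx : pairQP A x (alP i) = ∑ k, A k i * x k := by
    rw [pairQP_x_alP]; exact Finset.sum_congr rfl fun a _ => mul_comm _ _
  simp only [sQ_eq, sP_eq, pairQP_sub₁, pairQP_sub₂, pairQP_smul₂, pairQP_smul₁,
    pairQP_coroot_alP, hA i, hx]
  ring

lemma pair_wQ_wP (hA : ∀ i, A i i = 2) (b : ℕ) (x : QvLat n) (lam : PLat n) :
    pairQP A (wQ A ii b x) (wP A ii b lam) = pairQP A x lam := by
  induction b generalizing x lam with
  | zero => rfl
  | succ b ih =>
    show pairQP A (wQ A ii b (sQ A (ii (b+1)) x)) (wP A ii b (sP A (ii (b+1)) lam)) = _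
    rw [ih, pair_sQ_sP A hA]

lemma pair_coroot_sP (hA : ∀ i, A i i = 2) (i : Fin n) (lam : PLat n) :
    pairQP A (coroot i) (sP A i lam) = -pairQP A (coroot i) lam := by
  rw [sP_eq, pairQP_sub₂, pairQP_smul₂, pairQP_coroot_alP, hA]; ring

lemma sP_sub (i : Fin n) (x y : PLat n) : sP A i (x - y) = sP A i x - sP A i y := by
  rw [sP_eq, sP_eq, sP_eq, pairQP_sub₂, sub_smul]; abel

lemma sP_smul (i : Fin n) (c : ℤ) (x : PLat n) : sP A i (c • x) = c • sP A i x := by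
  rw [sP_eq, sP_eq, pairQP_smul₂, smul_sub, mul_smul]

lemma wP_sub (b : ℕ) (x y : PLat n) :
    wP A ii b (x - y) = wP A ii b x - wP A ii b y := by
  induction b generalizing x y with
  | zero => rfl
  | succ b ih =>
    show wP A ii b (sP A (ii (b+1)) (x - y)) = _
    rw [sP_sub, ih]; rfl

lemma wP_smul (b : ℕ) (c : ℤ) (x : PLat n) :
    wP A ii b (c • x) = c • wP A ii b x := by
  induction b generalizing x with
  | zero => rfl
  | succ b ih =>
    show wP A ii b (sP A (ii (b+1)) (c • x)) = _
    rw [sP_smul, ih]; rfl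

lemma wQ_smul (b : ℕ) (c : ℤ) (x : QvLat n) :
    wQ A ii b (c • x) = c • wQ A ii b x := by
  have sQs : ∀ (i : Fin n) (x : QvLat n), sQ A i (c • x) = c • sQ A i x := by
    intro i x
    have h : (∑ k, A k i * (c • x) k) = c * ∑ k, A k i * x k := by
      rw [Finset.mul_sum]
      exact Finset.sum_congr rfl fun a _ => by
        simp [smul_eq_mul]; ring
    rw [sQ_eq, sQ_eq, h, smul_sub, mul_smul]
  induction b generalizing x with
  | zero => rfl
  | succ b ih =>
    show wQ A ii b (sQ A (ii (b+1)) (c • x)) = _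
    rw [sQs, ih]; rfl

lemma wQ_neg (b : ℕ) (x : QvLat n) : wQ A ii b (-x) = -wQ A ii b x := by
  rw [← neg_one_smul ℤ x, wQ_smul, neg_one_smul]

/-- `tl b l λ = s_{i_{b+1}} ⋯ s_{i_l} λ` (identity if `l ≤ b`). -/
def tl (A : Fin n → Fin n → ℤ) (ii : ℕ → Fin n) (b : ℕ) : ℕ → PLat n → PLat n
  | 0 => id
  | (l+1) => fun lam => if l+1 ≤ b then lam else tl A ii b l (sP A (ii (l+1)) lam)

lemma tl_of_le (b l : ℕ) (h : l ≤ b) (lam : PLat n) : tl A ii b l lam = lam := by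
  cases l with
  | zero => rfl
  | succ l => show ite _ _ _ = _; rw [if_pos h]

lemma wP_tl (b : ℕ) : ∀ l, b ≤ l → ∀ lam : PLat n,
    wP A ii b (tl A ii b l lam) = wP A ii l lam := by
  intro l
  induction l with
  | zero =>
    intro h lam
    have : b = 0 := Nat.le_zero.mp h
    subst this; rfl
  | succ l ih =>
    intro h lam
    rcases eq_or_lt_of_le h with rfl | hlt
    · rw [tl_of_le _ _ _ _ le_rfl]
    · have hb : b ≤ l := Nat.lt_succ_iff.mp hlt
      have : tl A ii b (l+1) lam = tl A ii b l (sP A (ii (l+1)) lam) := by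
        show ite _ _ _ = _; rw [if_neg (by omega)]
      rw [this, ih hb]; rfl

lemma tl_step : ∀ l c, c < l → ∀ lam : PLat n,
    tl A ii c l lam = sP A (ii (c+1)) (tl A ii (c+1) l lam) := by
  intro l
  induction l with
  | zero => intro c h; omega
  | succ l ih =>
    intro c h lam
    have h1 : tl A ii c (l+1) lam = tl A ii c l (sP A (ii (l+1)) lam) := by
      show ite _ _ _ = _; rw [if_neg (by omega)]
    rcases Nat.lt_or_ge c l with hcl | hcl
    · rw [h1, ih c hcl]
      congr 1
      have : tl A ii (c+1) (l+1) lam = tl A ii (c+1) l (sP A (ii (l+1)) lam) := by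
        show ite _ _ _ = _; rw [if_neg (by omega)]
      rw [this]
    · have : c = l := by omega
      subst this
      rw [h1, tl_of_le _ _ _ _ le_rfl, tl_of_le _ _ _ _ (by omega)]

end Aux2
section Aux3
variable {n : ℕ} (A : Fin n → Fin n → ℤ) (d : Fin n → ℤ) (ii : ℕ → Fin n)

lemma sub_sP (i : Fin n) (lam : PLat n) :
    lam - sP A i lam = pairQP A (coroot i) lam • alP i := by
  rw [sP_eq]; abel

/-- Lemma W: expansion of `λ - w_l λ` in the simple-root basis. -/
lemma lemW (hA : ∀ i, A i i = 2) (l : ℕ) (lam : PLat n) :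
    lam - wP A ii l lam =
      ∑ b ∈ Finset.range l,
        pairQP A (wQ A ii (b+1) (coroot (ii (b+1)))) (wP A ii l lam) • alP (ii (b+1)) := by
  induction l generalizing lam with
  | zero => simp [wP]
  | succ l ih =>
    have h1 : wP A ii (l+1) lam = wP A ii l (sP A (ii (l+1)) lam) := rfl
    have hlast : pairQP A (wQ A ii (l+1) (coroot (ii (l+1)))) (wP A ii (l+1) lam)
        = pairQP A (coroot (ii (l+1))) lam := by
      have h2 : wQ A ii (l+1) (coroot (ii (l+1)))
          = -(wQ A ii l (coroot (ii (l+1)))) := by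
        show wQ A ii l (sQ A (ii (l+1)) (coroot (ii (l+1)))) = _
        rw [sQ_coroot_self A hA, wQ_neg]
      rw [h2, h1, pairQP_neg₁, pair_wQ_wP A ii hA, pair_coroot_sP A hA, neg_neg]
    rw [Finset.sum_range_succ, hlast]
    have key : lam - wP A ii (l+1) lam
        = (sP A (ii (l+1)) lam - wP A ii l (sP A (ii (l+1)) lam))
          + pairQP A (coroot (ii (l+1))) lam • alP (ii (l+1)) := by
      rw [← sub_sP A]; rw [h1]; abel
    rw [key, ih]
    congr 1

/-- Lemma B: expansion of `λ - w_k λ` in terms of the roots `w_b α_{i_{b+1}}`. -/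
lemma lemB (k : ℕ) (lam : PLat n) :
    lam - wP A ii k lam = ∑ b ∈ Finset.range k,
      pairQP A (coroot (ii (b+1))) lam • wP A ii b (alP (ii (b+1))) := by
  induction k with
  | zero => simp [wP]
  | succ k ih =>
    rw [Finset.sum_range_succ, ← ih]
    have h1 : wP A ii (k+1) lam = wP A ii k (sP A (ii (k+1)) lam) := rfl
    rw [h1, ← wP_smul, ← sub_sP A]
    rw [wP_sub]
    abel

lemma pairAl_eq_pairQP (mu lam : PLat n) :
    pairAl A d mu lam = pairQP A (fun j => d j * mu.1 j) lam := by
  rw [pairAl, pairQP, ← Finset.sum_add_distrib]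
  apply Finset.sum_congr rfl
  intro j _
  rw [pairQP_coroot, mul_add, mul_add, Finset.mul_sum]
  congr 1
  · rw [Finset.mul_sum]; apply Finset.sum_congr rfl; intro b _; ring
  · ring

end Aux3
section Aux4
variable {n : ℕ} (A : Fin n → Fin n → ℤ) (d : Fin n → ℤ) (ii : ℕ → Fin n)

lemma pairAl_zero₁ (lam : PLat n) : pairAl A d 0 lam = 0 := by
  simp [pairAl]

lemma pairAl_add₁ (mu nu lam : PLat n) :
    pairAl A d (mu + nu) lam = pairAl A d mu lam + pairAl A d nu lam := by
  simp only [pairAl, Prod.fst_add, Pi.add_apply, add_mul, Finset.sum_add_distrib]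

lemma pairAl_sub₁ (mu nu lam : PLat n) :
    pairAl A d (mu - nu) lam = pairAl A d mu lam - pairAl A d nu lam := by
  simp only [pairAl, Prod.fst_sub, Pi.sub_apply, sub_mul, Finset.sum_sub_distrib]

lemma pairAl_neg₁ (mu lam : PLat n) : pairAl A d (-mu) lam = -pairAl A d mu lam := by
  simp only [pairAl, Prod.fst_neg, Pi.neg_apply, neg_mul, Finset.sum_neg_distrib]

lemma pairAl_smul₁ (c : ℤ) (mu lam : PLat n) :
    pairAl A d (c • mu) lam = c * pairAl A d mu lam := by
  simp only [pairAl, Prod.smul_fst, Pi.smul_apply, smul_eq_mul, Finset.mul_sum]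
  apply Finset.sum_congr rfl; intro j _; ring

lemma pairAl_sum₁ (s : Finset ℕ) (f : ℕ → PLat n) (lam : PLat n) :
    pairAl A d (∑ b ∈ s, f b) lam = ∑ b ∈ s, pairAl A d (f b) lam := by
  classical
  induction s using Finset.induction with
  | empty => simp [pairAl_zero₁]
  | insert _ _ h ih => rw [Finset.sum_insert h, Finset.sum_insert h, pairAl_add₁, ih]

lemma pairAl_add₂ (mu lam nu : PLat n) :
    pairAl A d mu (lam + nu) = pairAl A d mu lam + pairAl A d mu nu := by
  simp only [pairAl, pairQP_add₂, mul_add, Finset.sum_add_distrib]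

lemma pairAl_alP (j : Fin n) (lam : PLat n) :
    pairAl A d (alP j) lam = d j * pairQP A (coroot j) lam := by
  rw [pairAl_eq_pairQP]
  have h : (fun j' => d j' * (alP j).1 j') = d j • coroot j := by
    funext j'
    simp only [alP, coroot, Pi.smul_apply, smul_eq_mul, mul_ite, mul_one, mul_zero]
    split
    · simp_all
    · rfl
  rw [h, pairQP_smul₁]

lemma dmul_sP (hsym : ∀ i j, d i * A i j = d j * A j i) (i : Fin n) (mu : PLat n)
    (h2 : mu.2 = 0) :
    (fun j => d j * (sP A i mu).1 j) = sQ A i (fun j => d j * mu.1 j) := by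
  funext j
  simp only [sP, sQ]
  split
  · next h =>
    subst h
    have hz : mu.2 j = 0 := by rw [h2]; rfl
    have hs : (∑ k, A k j * (d k * mu.1 k)) = d j * ∑ k, A j k * mu.1 k := by
      rw [Finset.mul_sum]
      apply Finset.sum_congr rfl
      intro k _
      linear_combination mu.1 k * hsym k j
    rw [hz, hs]
    ring
  · rfl

end Aux4
section Aux5
variable {n : ℕ} (A : Fin n → Fin n → ℤ) (d : Fin n → ℤ) (ii : ℕ → Fin n)

lemma sP_snd (i : Fin n) (mu : PLat n) : (sP A i mu).2 = mu.2 := rfl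

lemma dmul_wP (hsym : ∀ i j, d i * A i j = d j * A j i) (b : ℕ) (mu : PLat n)
    (h2 : mu.2 = 0) :
    (fun j => d j * (wP A ii b mu).1 j) = wQ A ii b (fun j => d j * mu.1 j) := by
  induction b generalizing mu with
  | zero => rfl
  | succ b ih =>
    show (fun j => d j * (wP A ii b (sP A (ii (b+1)) mu)).1 j)
      = wQ A ii b (sQ A (ii (b+1)) (fun j => d j * mu.1 j))
    rw [← dmul_sP A d hsym (ii (b+1)) mu h2]
    exact ih (sP A (ii (b+1)) mu) h2

lemma pairAl_wP_alP (hsym : ∀ i j, d i * A i j = d j * A j i) (b : ℕ) (j : Fin n)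
    (lam : PLat n) :
    pairAl A d (wP A ii b (alP j)) lam = d j * pairQP A (wQ A ii b (coroot j)) lam := by
  rw [pairAl_eq_pairQP, dmul_wP A d ii hsym b (alP j) rfl]
  have h : (fun j' => d j' * (alP j).1 j') = d j • coroot j := by
    funext j'
    simp only [alP, coroot, Pi.smul_apply, smul_eq_mul, mul_ite, mul_one, mul_zero]
    split
    · simp_all
    · rfl
  rw [h, wQ_smul, pairQP_smul₁]

/-- The coefficient `p_{b,l} = (w_b^∨ α_{i_b}^∨ , w_l ω_{i_l})`. -/
def Pco (A : Fin n → Fin n → ℤ) (ii : ℕ → Fin n) (b l : ℕ) : ℤ :=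
  pairQP A (wQ A ii b (coroot (ii b))) (wP A ii l (omP (ii l)))

/-- The coefficient `(α_j^∨ , w_l ω_{i_l})`. -/
def Rco (A : Fin n → Fin n → ℤ) (ii : ℕ → Fin n) (j : Fin n) (l : ℕ) : ℤ :=
  pairQP A (coroot j) (wP A ii l (omP (ii l)))

/-- Corollary (I): full expansion paired with `α_j^∨`. -/
lemma corI (hA : ∀ i, A i i = 2) (l : ℕ) (j : Fin n) :
    ∑ b ∈ Finset.range l, Pco A ii (b+1) l * A j (ii (b+1))
      = (if j = ii l then 1 else 0) - Rco A ii j l := by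
  have h := congrArg (pairQP A (coroot j)) (lemW A ii hA l (omP (ii l)))
  rw [pairQP_sub₂, pairQP_sum₂, pairQP_coroot_omP] at h
  simp only [pairQP_smul₂, pairQP_coroot_alP] at h
  exact h.symm

/-- Corollary (Ipart): partial expansion paired with `α_j^∨`. -/
lemma corIpart (hA : ∀ i, A i i = 2) (k c : ℕ) (hc : c ≤ k) (j : Fin n) :
    ∑ a ∈ Finset.range c, Pco A ii (a+1) k * A j (ii (a+1))
      = pairQP A (coroot j) (tl A ii c k (omP (ii k))) - Rco A ii j k := by
  have hw : wP A ii c (tl A ii c k (omP (ii k))) = wP A ii k (omP (ii k)) :=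
    wP_tl A ii c k hc (omP (ii k))
  have h := congrArg (pairQP A (coroot j)) (lemW A ii hA c (tl A ii c k (omP (ii k))))
  rw [pairQP_sub₂, pairQP_sum₂, hw] at h
  simp only [pairQP_smul₂, pairQP_coroot_alP] at h
  exact h.symm

lemma diag_lt (hA : ∀ i, A i i = 2) (b k : ℕ) (hb : b < k) :
    pairQP A (coroot (ii (b+1))) (tl A ii b k (omP (ii k))) = -(Pco A ii (b+1) k) := by
  rw [tl_step A ii k b hb, pair_coroot_sP A hA]
  congr 1
  rw [← pair_wQ_wP A ii hA (b+1) (coroot (ii (b+1))) (tl A ii (b+1) k (omP (ii k))),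
    wP_tl A ii (b+1) k hb (omP (ii k))]
  rfl

lemma diag_ge (b k : ℕ) (hb : k ≤ b) (j : Fin n) :
    pairQP A (coroot j) (tl A ii b k (omP (ii k))) = if j = ii k then 1 else 0 := by
  rw [tl_of_le A ii b k hb, pairQP_coroot_omP]

/-- F1: the two evaluations of `(ω_{i_k} - w_k ω_{i_k} , w_l ω_{i_l})`. -/
lemma corF1 (hA : ∀ i, A i i = 2) (hsym : ∀ i j, d i * A i j = d j * A j i)
    (k l : ℕ) :
    ∑ a ∈ Finset.range k,
        Pco A ii (a+1) k * (d (ii (a+1)) * Rco A ii (ii (a+1)) l)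
      = -∑ b ∈ Finset.range k,
          (if ii (b+1) = ii k then 1 else 0) * (d (ii (b+1)) * Pco A ii (b+1) l) := by
  have hW := congrArg (fun mu => pairAl A d mu (wP A ii l (omP (ii l))))
    (lemW A ii hA k (omP (ii k)))
  have hB := congrArg (fun mu => pairAl A d mu (wP A ii l (omP (ii l))))
    (lemB A ii k (omP (ii k)))
  simp only [pairAl_sum₁, pairAl_smul₁] at hW hB
  rw [hW] at hB
  -- hB : ∑ a, P(a+1)k • pairAl (alP (ii (a+1))) γ_l = ∑ b, δ • pairAl (wP b (alP)) γ_l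
  simp only [pairAl_alP] at hB
  simp only [pairAl_wP_alP A d ii hsym] at hB
  simp only [Pco, Rco]
  rw [hB, ← Finset.sum_neg_distrib]
  apply Finset.sum_congr rfl
  intro b hb
  have hco : pairQP A (coroot (ii (b+1))) (omP (ii k)) = if ii (b+1) = ii k then 1 else 0 :=
    pairQP_coroot_omP A _ _
  have h2 : wQ A ii (b+1) (coroot (ii (b+1))) = -(wQ A ii b (coroot (ii (b+1)))) := by
    show wQ A ii b (sQ A (ii (b+1)) (coroot (ii (b+1)))) = _
    rw [sQ_coroot_self A hA, wQ_neg]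
  have hq : pairQP A (wQ A ii b (coroot (ii (b+1)))) (wP A ii l (omP (ii l)))
      = -(pairQP A (wQ A ii (b+1) (coroot (ii (b+1)))) (wP A ii l (omP (ii l)))) := by
    rw [h2, pairQP_neg₁, neg_neg]
  rw [hco, hq]
  ring

end Aux5
section Aux6
variable {n : ℕ} (A : Fin n → Fin n → ℤ) (d : Fin n → ℤ) (ii : ℕ → Fin n)

lemma sum_ite_lt_range {M : Type*} [AddCommMonoid M] (k b : ℕ) (f : ℕ → M) :
    ∑ a ∈ Finset.range k, (if a < b then f a else 0)
      = ∑ a ∈ Finset.range (min b k), f a := by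
  rw [← Finset.sum_filter]
  congr 1
  ext a
  simp only [Finset.mem_filter, Finset.mem_range, Nat.lt_min]
  tauto

lemma hsign (a b : ℕ) :
    ((a:ℤ) - (b:ℤ)).sign
      = 1 - (if a = b then 1 else 0) - 2 * (if a < b then 1 else 0) := by
  rcases lt_trichotomy a b with h | h | h
  · have h0 : ((a:ℤ) - (b:ℤ)) < 0 := by omega
    rw [Int.sign_eq_neg_one_of_neg h0]
    rw [if_neg (by omega), if_pos h]
    norm_num
  · subst h
    simp
  · have h0 : (0:ℤ) < ((a:ℤ) - (b:ℤ)) := by omega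
    rw [Int.sign_eq_one_of_pos h0]
    rw [if_neg (by omega), if_neg (by omega)]
    norm_num

lemma mainScalar (hA : ∀ i, A i i = 2) (hsym : ∀ i j, d i * A i j = d j * A j i)
    (k l : ℕ) (hkl : k ≤ l) :
    ∑ a ∈ Finset.range k, ∑ b ∈ Finset.range l,
        Pco A ii (a+1) k * Pco A ii (b+1) l *
          (((a:ℤ) - (b:ℤ)).sign * (d (ii (a+1)) * A (ii (a+1)) (ii (b+1))))
      = -∑ a ∈ Finset.range k, Pco A ii (a+1) k *
          (d (ii (a+1)) *
            ((if ii (a+1) = ii l then 1 else 0) + Rco A ii (ii (a+1)) l)) := by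
  -- canonical atomic sums
  set S1 : ℤ := ∑ a ∈ Finset.range k, Pco A ii (a+1) k *
      (d (ii (a+1)) * (if ii (a+1) = ii l then 1 else 0)) with hS1
  set S2 : ℤ := ∑ a ∈ Finset.range k, Pco A ii (a+1) k *
      (d (ii (a+1)) * Rco A ii (ii (a+1)) l) with hS2
  set S3 : ℤ := ∑ a ∈ Finset.range k, Pco A ii (a+1) k *
      (d (ii (a+1)) * Pco A ii (a+1) l) with hS3
  set S4 : ℤ := ∑ b ∈ Finset.range l, Pco A ii (b+1) l *
      (d (ii (b+1)) * (if ii (b+1) = ii k then 1 else 0)) with hS4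
  set S4' : ℤ := ∑ b ∈ Finset.range k, Pco A ii (b+1) l *
      (d (ii (b+1)) * (if ii (b+1) = ii k then 1 else 0)) with hS4'
  set S5 : ℤ := ∑ b ∈ Finset.range l, Pco A ii (b+1) l *
      (d (ii (b+1)) * Rco A ii (ii (b+1)) k) with hS5
  -- step 1 : split the sign
  have step1 : ∑ a ∈ Finset.range k, ∑ b ∈ Finset.range l,
        Pco A ii (a+1) k * Pco A ii (b+1) l *
          (((a:ℤ) - (b:ℤ)).sign * (d (ii (a+1)) * A (ii (a+1)) (ii (b+1))))
      = (∑ a ∈ Finset.range k, ∑ b ∈ Finset.range l,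
          Pco A ii (a+1) k * Pco A ii (b+1) l *
            (d (ii (a+1)) * A (ii (a+1)) (ii (b+1))))
        - (∑ a ∈ Finset.range k, ∑ b ∈ Finset.range l,
            (if a = b then Pco A ii (a+1) k * Pco A ii (b+1) l *
              (d (ii (a+1)) * A (ii (a+1)) (ii (b+1))) else 0))
        - 2 * (∑ a ∈ Finset.range k, ∑ b ∈ Finset.range l,
            (if a < b then Pco A ii (a+1) k * Pco A ii (b+1) l *
              (d (ii (a+1)) * A (ii (a+1)) (ii (b+1))) else 0)) := by
    simp only [Finset.mul_sum, ← Finset.sum_sub_distrib]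
    apply Finset.sum_congr rfl; intro a _
    apply Finset.sum_congr rfl; intro b _
    rw [hsign a b]
    split_ifs <;> ring
  -- step 2 : full sum
  have hFull : (∑ a ∈ Finset.range k, ∑ b ∈ Finset.range l,
        Pco A ii (a+1) k * Pco A ii (b+1) l *
          (d (ii (a+1)) * A (ii (a+1)) (ii (b+1)))) = S1 - S2 := by
    rw [hS1, hS2, ← Finset.sum_sub_distrib]
    apply Finset.sum_congr rfl; intro a _
    have h := corI A ii hA l (ii (a+1))
    calc ∑ b ∈ Finset.range l, Pco A ii (a+1) k * Pco A ii (b+1) l *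
            (d (ii (a+1)) * A (ii (a+1)) (ii (b+1)))
        = Pco A ii (a+1) k * d (ii (a+1)) *
            ∑ b ∈ Finset.range l, Pco A ii (b+1) l * A (ii (a+1)) (ii (b+1)) := by
          rw [Finset.mul_sum]
          apply Finset.sum_congr rfl; intro b _; ring
      _ = _ := by rw [h]; ring
  -- step 3 : diagonal sum
  have hDiag : (∑ a ∈ Finset.range k, ∑ b ∈ Finset.range l,
        (if a = b then Pco A ii (a+1) k * Pco A ii (b+1) l *
          (d (ii (a+1)) * A (ii (a+1)) (ii (b+1))) else 0)) = 2 * S3 := by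
    rw [hS3, Finset.mul_sum]
    apply Finset.sum_congr rfl; intro a ha
    rw [Finset.sum_ite_eq]
    rw [if_pos (Finset.mem_range.mpr (lt_of_lt_of_le (Finset.mem_range.mp ha) hkl))]
    rw [hA]
    ring
  -- step 4 : lower-triangular sum
  have hSlt : (∑ a ∈ Finset.range k, ∑ b ∈ Finset.range l,
        (if a < b then Pco A ii (a+1) k * Pco A ii (b+1) l *
          (d (ii (a+1)) * A (ii (a+1)) (ii (b+1))) else 0)) = -S3 + (S4 - S4') - S5 := by
    rw [Finset.sum_comm]
    have hinner : ∀ b ∈ Finset.range l,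
        (∑ a ∈ Finset.range k,
          (if a < b then Pco A ii (a+1) k * Pco A ii (b+1) l *
            (d (ii (a+1)) * A (ii (a+1)) (ii (b+1))) else 0))
        = Pco A ii (b+1) l * (d (ii (b+1)) *
            ((if b < k then -(Pco A ii (b+1) k) else (if ii (b+1) = ii k then 1 else 0))
              - Rco A ii (ii (b+1)) k)) := by
      intro b _
      have e1 : ∀ a : ℕ, (if a < b then Pco A ii (a+1) k * Pco A ii (b+1) l *
            (d (ii (a+1)) * A (ii (a+1)) (ii (b+1))) else 0)
          = (if a < b then Pco A ii (b+1) l * d (ii (b+1)) *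
              (Pco A ii (a+1) k * A (ii (b+1)) (ii (a+1))) else 0) := by
        intro a
        split_ifs with h
        · linear_combination (Pco A ii (a+1) k * Pco A ii (b+1) l) *
            hsym (ii (a+1)) (ii (b+1))
        · rfl
      simp only [e1]
      rw [sum_ite_lt_range k b
        (fun a => Pco A ii (b+1) l * d (ii (b+1)) *
          (Pco A ii (a+1) k * A (ii (b+1)) (ii (a+1))))]
      rw [← Finset.mul_sum]
      rw [corIpart A ii hA k (min b k) (min_le_right b k) (ii (b+1))]
      rcases Nat.lt_or_ge b k with hb | hb
      · rw [min_eq_left hb.le, diag_lt A ii hA b k hb, if_pos hb]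
        ring
      · rw [min_eq_right hb, diag_ge A ii k k le_rfl (ii (b+1)),
          if_neg (show ¬ b < k by omega)]
        ring
    rw [Finset.sum_congr rfl hinner]
    -- now split the resulting sum into S3, S4, S4', S5
    have hsub : ∑ b ∈ Finset.range l, Pco A ii (b+1) l * (d (ii (b+1)) *
          ((if b < k then -(Pco A ii (b+1) k) else (if ii (b+1) = ii k then 1 else 0))
            - Rco A ii (ii (b+1)) k))
        = (∑ b ∈ Finset.range l, Pco A ii (b+1) l * (d (ii (b+1)) *
            (if b < k then -(Pco A ii (b+1) k) else (if ii (b+1) = ii k then 1 else 0))))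
          - S5 := by
      rw [hS5, ← Finset.sum_sub_distrib]
      apply Finset.sum_congr rfl; intro b _; ring
    rw [hsub]
    have hsplit : (∑ b ∈ Finset.range l, Pco A ii (b+1) l * (d (ii (b+1)) *
          (if b < k then -(Pco A ii (b+1) k) else (if ii (b+1) = ii k then 1 else 0))))
        = -S3 + (S4 - S4') := by
      rw [Finset.range_eq_Ico, ← Finset.sum_Ico_consecutive _ (Nat.zero_le k) hkl]
      have hpart1 : ∑ b ∈ Finset.Ico 0 k, Pco A ii (b+1) l * (d (ii (b+1)) *
            (if b < k then -(Pco A ii (b+1) k) else (if ii (b+1) = ii k then 1 else 0)))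
          = -S3 := by
        rw [hS3, ← Finset.sum_neg_distrib, ← Finset.range_eq_Ico]
        apply Finset.sum_congr rfl; intro b hb
        rw [if_pos (Finset.mem_range.mp hb)]
        ring
      have hpart2 : ∑ b ∈ Finset.Ico k l, Pco A ii (b+1) l * (d (ii (b+1)) *
            (if b < k then -(Pco A ii (b+1) k) else (if ii (b+1) = ii k then 1 else 0)))
          = S4 - S4' := by
        have h4 : S4 = S4' + ∑ b ∈ Finset.Ico k l, Pco A ii (b+1) l *
            (d (ii (b+1)) * (if ii (b+1) = ii k then 1 else 0)) := by
          rw [hS4, hS4', Finset.range_eq_Ico]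
          rw [Finset.range_eq_Ico]
          exact (Finset.sum_Ico_consecutive (fun b => Pco A ii (b+1) l *
            (d (ii (b+1)) * (if ii (b+1) = ii k then 1 else 0))) (Nat.zero_le k) hkl).symm
        rw [h4]
        have : ∀ b ∈ Finset.Ico k l, Pco A ii (b+1) l * (d (ii (b+1)) *
              (if b < k then -(Pco A ii (b+1) k) else (if ii (b+1) = ii k then 1 else 0)))
            = Pco A ii (b+1) l * (d (ii (b+1)) * (if ii (b+1) = ii k then 1 else 0)) := by
          intro b hb
          have hbm := Finset.mem_Ico.mp hb
          rw [if_neg (show ¬ b < k by omega)]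
        rw [Finset.sum_congr rfl this]
        ring
      rw [hpart1, hpart2]
    rw [hsplit]
  -- step 5 : symmetry
  have hSym : S1 - S2 = S4 - S5 := by
    have e1 : S1 - S2 = ∑ a ∈ Finset.range k, ∑ b ∈ Finset.range l,
        Pco A ii (a+1) k * d (ii (a+1)) *
          (Pco A ii (b+1) l * A (ii (a+1)) (ii (b+1))) := by
      rw [hS1, hS2, ← Finset.sum_sub_distrib]
      apply Finset.sum_congr rfl; intro a _
      rw [← Finset.mul_sum, corI A ii hA l (ii (a+1))]
      ring
    have e2 : S4 - S5 = ∑ b ∈ Finset.range l, ∑ a ∈ Finset.range k,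
        Pco A ii (b+1) l * d (ii (b+1)) *
          (Pco A ii (a+1) k * A (ii (b+1)) (ii (a+1))) := by
      rw [hS4, hS5, ← Finset.sum_sub_distrib]
      apply Finset.sum_congr rfl; intro b _
      rw [← Finset.mul_sum, corI A ii hA k (ii (b+1))]
      ring
    rw [e1, e2, Finset.sum_comm]
    apply Finset.sum_congr rfl; intro b _
    apply Finset.sum_congr rfl; intro a _
    linear_combination (Pco A ii (a+1) k * Pco A ii (b+1) l) * hsym (ii (a+1)) (ii (b+1))
  -- step 6 : F1
  have hF1 : S2 = -S4' := by
    have h := corF1 A d ii hA hsym k l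
    rw [hS2, hS4']
    calc (∑ a ∈ Finset.range k, Pco A ii (a+1) k *
            (d (ii (a+1)) * Rco A ii (ii (a+1)) l))
        = -∑ b ∈ Finset.range k, (if ii (b+1) = ii k then 1 else 0) *
            (d (ii (b+1)) * Pco A ii (b+1) l) := h
      _ = -∑ b ∈ Finset.range k, Pco A ii (b+1) l *
            (d (ii (b+1)) * (if ii (b+1) = ii k then 1 else 0)) := by
          congr 1
          apply Finset.sum_congr rfl; intro b _; ring
  -- assemble
  rw [step1, hFull, hDiag, hSlt]
  have hgoal : -∑ a ∈ Finset.range k, Pco A ii (a+1) k *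
      (d (ii (a+1)) * ((if ii (a+1) = ii l then 1 else 0) + Rco A ii (ii (a+1)) l))
      = -(S1 + S2) := by
    rw [hS1, hS2, ← Finset.sum_add_distrib]
    congr 1
    apply Finset.sum_congr rfl; intro a _; ring
  rw [hgoal]
  linarith [hSym, hF1]

end Aux6
section Aux7
variable {n : ℕ} (A : Fin n → Fin n → ℤ) (d : Fin n → ℤ) (ii : ℕ → Fin n)

lemma phiMap'_eps {m : ℕ} (k : ℕ) (hk1 : 1 ≤ k) (hk2 : k ≤ m) :
    phiMap' A ii m (eps m k) = phiE' A ii m k := by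
  have hkm : k - 1 < m := by omega
  rw [phiMap']
  rw [Finset.sum_eq_single (⟨k-1, hkm⟩ : Fin m)]
  · have h1 : ((⟨k-1, hkm⟩ : Fin m) : ℕ) + 1 = k := by simp; omega
    have h2 : eps m k ⟨k-1, hkm⟩ = 1 := by simp [eps, h1]
    rw [h1, h2, one_smul]
  · intro b _ hb
    have hbk : ¬((b:ℕ) + 1 = k) := by
      intro h
      apply hb
      apply Fin.ext
      show (b:ℕ) = k - 1
      omega
    simp [eps, hbk]
  · intro h
    exact absurd (Finset.mem_univ _) h

lemma phiE'_apply {m : ℕ} (k : ℕ) (p : Fin m) :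
    phiE' A ii m k p = -(if (p:ℕ)+1 ≤ k then Pco A ii ((p:ℕ)+1) k else 0) := by
  rw [phiE']
  simp only [Pi.neg_apply, Finset.sum_apply, Pi.smul_apply, smul_eq_mul]
  congr 1
  rw [Finset.sum_eq_single p]
  · simp [eps, Pco]
  · intro b _ hb
    have hne : ¬((p:ℕ)+1 = (b:ℕ)+1) := by
      intro h
      exact hb (Fin.ext (by omega))
    simp [eps, hne]
    intro h _
    exact absurd (Fin.ext h).symm hb
  · intro h
    exact absurd (Finset.mem_univ _) h

lemma sum_fin_ite {m : ℕ} (k : ℕ) (hk : k ≤ m) (F : ℕ → ℤ) :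
    ∑ p : Fin m, (if (p:ℕ)+1 ≤ k then F (p:ℕ) else 0)
      = ∑ a ∈ Finset.range k, F a := by
  rw [Fin.sum_univ_eq_sum_range (fun p => if p+1 ≤ k then F p else 0) m]
  rw [← Finset.sum_subset (Finset.range_subset_range.mpr hk)]
  · apply Finset.sum_congr rfl
    intro a ha
    rw [if_pos (by simp only [Finset.mem_range] at ha; omega)]
  · intro x hx hnx
    simp only [Finset.mem_range] at hx hnx
    rw [if_neg (by omega)]

lemma LamF_antisymm {m : ℕ} (hsym : ∀ i j, d i * A i j = d j * A j i)
    (f g : Fin m → ℤ) :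
    LamF A d ii m f g = -LamF A d ii m g f := by
  rw [LamF, LamF, Finset.sum_comm, ← Finset.sum_neg_distrib]
  apply Finset.sum_congr rfl; intro p _
  rw [← Finset.sum_neg_distrib]
  apply Finset.sum_congr rfl; intro q _
  have hs : (((q:ℕ):ℤ) - ((p:ℕ):ℤ)).sign = -((((p:ℕ):ℤ) - ((q:ℕ):ℤ)).sign) := by
    rw [← Int.sign_neg]
    congr 1
    ring
  rw [hs]
  linear_combination (f q * g p * ((((p:ℕ):ℤ) - ((q:ℕ):ℤ)).sign)) *
    hsym (ii ((p:ℕ)+1)) (ii ((q:ℕ)+1))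

lemma mainKL {m : ℕ} (hA : ∀ i, A i i = 2) (hsym : ∀ i j, d i * A i j = d j * A j i)
    (k : ℕ) (hk1 : 1 ≤ k) (hk2 : k ≤ m)
    (l : ℕ) (hl1 : 1 ≤ l) (hl2 : l ≤ m) (hkl : k ≤ l) :
    LamF A d ii m (phiMap' A ii m (eps m k)) (phiMap' A ii m (eps m l)) =
      pairAl A d (wP A ii k (omP (ii k)) - omP (ii k))
        (omP (ii l) + wP A ii l (omP (ii l))) := by
  rw [phiMap'_eps A ii k hk1 hk2, phiMap'_eps A ii l hl1 hl2]
  have e1 : ∀ p ∈ (Finset.univ : Finset (Fin m)),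
      (∑ q : Fin m, phiE' A ii m k p * phiE' A ii m l q *
        ((((p:ℕ):ℤ) - ((q:ℕ):ℤ)).sign *
          (d (ii ((p:ℕ)+1)) * A (ii ((p:ℕ)+1)) (ii ((q:ℕ)+1)))))
      = (if (p:ℕ)+1 ≤ k then
          (∑ q : Fin m, (if (q:ℕ)+1 ≤ l then
            Pco A ii ((p:ℕ)+1) k * Pco A ii ((q:ℕ)+1) l *
              ((((p:ℕ):ℤ) - ((q:ℕ):ℤ)).sign *
                (d (ii ((p:ℕ)+1)) * A (ii ((p:ℕ)+1)) (ii ((q:ℕ)+1)))) else 0))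
        else 0) := by
    intro p _
    split_ifs with hp
    · apply Finset.sum_congr rfl
      intro q _
      rw [phiE'_apply, phiE'_apply, if_pos hp]
      split_ifs with hq <;> ring
    · apply Finset.sum_eq_zero
      intro q _
      rw [phiE'_apply A ii k p, if_neg hp]
      ring
  have hL : LamF A d ii m (phiE' A ii m k) (phiE' A ii m l)
      = ∑ a ∈ Finset.range k, ∑ b ∈ Finset.range l,
          Pco A ii (a+1) k * Pco A ii (b+1) l *
            (((a:ℤ) - (b:ℤ)).sign * (d (ii (a+1)) * A (ii (a+1)) (ii (b+1)))) :=
    calc LamF A d ii m (phiE' A ii m k) (phiE' A ii m l)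
        = ∑ p : Fin m, (if (p:ℕ)+1 ≤ k then
            (∑ q : Fin m, (if (q:ℕ)+1 ≤ l then
              Pco A ii ((p:ℕ)+1) k * Pco A ii ((q:ℕ)+1) l *
                ((((p:ℕ):ℤ) - ((q:ℕ):ℤ)).sign *
                  (d (ii ((p:ℕ)+1)) * A (ii ((p:ℕ)+1)) (ii ((q:ℕ)+1)))) else 0))
          else 0) := Finset.sum_congr rfl e1
      _ = ∑ a ∈ Finset.range k,
            (∑ q : Fin m, (if (q:ℕ)+1 ≤ l then
              Pco A ii (a+1) k * Pco A ii ((q:ℕ)+1) l *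
                (((a:ℤ) - ((q:ℕ):ℤ)).sign *
                  (d (ii (a+1)) * A (ii (a+1)) (ii ((q:ℕ)+1)))) else 0)) :=
          sum_fin_ite k hk2 (fun t =>
            ∑ q : Fin m, (if (q:ℕ)+1 ≤ l then
              Pco A ii (t+1) k * Pco A ii ((q:ℕ)+1) l *
                (((t:ℤ) - ((q:ℕ):ℤ)).sign *
                  (d (ii (t+1)) * A (ii (t+1)) (ii ((q:ℕ)+1)))) else 0))
      _ = ∑ a ∈ Finset.range k, ∑ b ∈ Finset.range l,
            Pco A ii (a+1) k * Pco A ii (b+1) l *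
              (((a:ℤ) - (b:ℤ)).sign * (d (ii (a+1)) * A (ii (a+1)) (ii (b+1)))) :=
          Finset.sum_congr rfl (fun a _ =>
            sum_fin_ite l hl2 (fun t =>
              Pco A ii (a+1) k * Pco A ii (t+1) l *
                (((a:ℤ) - (t:ℤ)).sign * (d (ii (a+1)) * A (ii (a+1)) (ii (t+1))))))
  rw [hL, mainScalar A d ii hA hsym k l hkl]
  have hneg : wP A ii k (omP (ii k)) - omP (ii k)
      = -(omP (ii k) - wP A ii k (omP (ii k))) := (neg_sub _ _).symm
  rw [hneg, pairAl_neg₁, lemW A ii hA k (omP (ii k)), pairAl_sum₁]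
  congr 1
  apply Finset.sum_congr rfl
  intro a _
  rw [pairAl_smul₁, pairAl_alP, pairQP_add₂, pairQP_coroot_omP]
  simp only [Pco, Rco]
  try ring
end Aux7

/-- values of `Λ_𝐢` on the vectors `φ'_𝐢(ε_k)`. -/
theorem Lambda_phi'_eps {n m : ℕ} (hm : 1 ≤ m)
    (A : Fin n → Fin n → ℤ) (d : Fin n → ℤ)
    (hA : ∀ i, A i i = 2) (hd : ∀ i, 0 < d i)
    (hsym : ∀ i j, d i * A i j = d j * A j i)
    (ii : ℕ → Fin n)
    (k : ℕ) (hk1 : 1 ≤ k) (hk2 : k ≤ m)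
    (l : ℕ) (hl1 : 1 ≤ l) (hl2 : l ≤ m) :
    LamF A d ii m (phiMap' A ii m (eps m k)) (phiMap' A ii m (eps m l)) =
      if k ≤ l then
        pairAl A d (wP A ii k (omP (ii k)) - omP (ii k))
          (omP (ii l) + wP A ii l (omP (ii l)))
      else
        pairAl A d (omP (ii l) - wP A ii l (omP (ii l)))
          (wP A ii k (omP (ii k)) + omP (ii k)) := by
  rcases le_or_gt k l with hkl | hlk
  · rw [if_pos hkl]
    exact mainKL A d ii hA hsym k hk1 hk2 l hl1 hl2 hkl
  · rw [if_neg (by omega)]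
    rw [LamF_antisymm A d ii hsym]
    rw [mainKL A d ii hA hsym l hl1 hl2 k hk1 hk2 hlk.le]
    rw [← pairAl_neg₁, neg_sub]
    rw [add_comm (omP (ii k)) (wP A ii k (omP (ii k)))]
end
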